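/- arXiv:1311.2809 — 4 statements merged into one kernel-verified Lean document; each statement's English description precedes it below -/
import Mathlib

section
/- Let K be an imaginary quadratic field with ring of integers O_K, and let q be a nonzero ideal of O_K. If w lies in the dual of q with respect to the trace pairing (i.e., Tr_{K/Q}(wβ) ∈ ℤ for all β ∈ q), and β ranges over a complete residue system modulo q, then for every ε > 0 the quadratic exponential sum ∑_{β mod q} e^{2πi Tr(wβ²)} is bounded by O_ε(N(wqD_K + q)^{1/2-ε} · N(q)^{1/2+ε}), where D_K is the different of K and N denotes the absolute ideal norm. -/
open NumberField
open scoped nonZeroDivisors Classical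

noncomputable section GaussSumAux

variable {K : Type*} [Field K] [NumberField K]

/-- The exponential `e(Tr(w z))`. -/
noncomputable def expT (w z : K) : ℂ :=
  Complex.exp (2 * Real.pi * Complex.I * ((Algebra.trace ℚ K (w * z) : ℚ) : ℂ))

lemma expT_def (w z : K) : expT w z =
    Complex.exp (2 * Real.pi * Complex.I * ((Algebra.trace ℚ K (w * z) : ℚ) : ℂ)) := rfl

lemma expT_add (w a b : K) : expT w (a + b) = expT w a * expT w b := by
  rw [expT, expT, expT, ← Complex.exp_add]
  congr 1
  rw [mul_add, map_add]
  push_cast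
  ring

lemma expT_int {w z : K} (h : ∃ n : ℤ, Algebra.trace ℚ K (w * z) = n) : expT w z = 1 := by
  obtain ⟨n, hn⟩ := h
  rw [expT, hn, ← Complex.exp_int_mul_two_pi_mul_I n]
  congr 1
  push_cast
  ring

lemma expT_abs (w z : K) : ‖expT w z‖ = 1 := by
  rw [expT]
  have : 2 * Real.pi * Complex.I * ((Algebra.trace ℚ K (w * z) : ℚ) : ℂ)
      = ((2 * Real.pi * ((Algebra.trace ℚ K (w * z) : ℚ) : ℝ) : ℝ) : ℂ) * Complex.I := by
    push_cast
    ring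
  rw [this, Complex.norm_exp_ofReal_mul_I]

lemma expT_conj (w z : K) : (starRingEnd ℂ) (expT w z) = expT w (-z) := by
  rw [expT, expT, ← Complex.exp_conj]
  congr 1
  rw [mul_neg, map_neg]
  push_cast
  simp [Complex.ext_iff]

lemma expT_ne_one {w z : K} (h : ¬ ∃ n : ℤ, Algebra.trace ℚ K (w * z) = n) :
    expT w z ≠ 1 := by
  intro he
  rw [expT, Complex.exp_eq_one_iff] at he
  obtain ⟨n, hn⟩ := he
  apply h
  refine ⟨n, ?_⟩
  have h2 : (2 * Real.pi * Complex.I : ℂ) ≠ 0 := by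
    simp [Real.pi_ne_zero, Complex.I_ne_zero]
  rw [mul_comm ((n : ℂ)) (2 * Real.pi * Complex.I)] at hn
  have := mul_left_cancel₀ h2 hn
  exact_mod_cast this

/-- The ideal of `δ` such that `Tr(w δ γ) ∈ ℤ` for all `γ`. -/
noncomputable def dualC (K : Type*) [Field K] [NumberField K] (w : K) : Ideal (𝓞 K) where
  carrier := {δ | ∀ γ : 𝓞 K, ∃ n : ℤ,
    Algebra.trace ℚ K (w * (algebraMap (𝓞 K) K δ * algebraMap (𝓞 K) K γ)) = n}
  add_mem' := by
    intro δ δ' h h' γ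
    obtain ⟨n, hn⟩ := h γ
    obtain ⟨m, hm⟩ := h' γ
    refine ⟨n + m, ?_⟩
    rw [map_add, add_mul, mul_add, map_add, hn, hm]
    push_cast; ring
  zero_mem' := by
    intro γ
    exact ⟨0, by simp⟩
  smul_mem' := by
    intro α δ h γ
    obtain ⟨n, hn⟩ := h (α * γ)
    refine ⟨n, ?_⟩
    rw [← hn]
    congr 1
    simp only [smul_eq_mul, map_mul]
    ring

lemma mem_dualC_iff {w : K} {δ : 𝓞 K} : δ ∈ dualC K w ↔ ∀ γ : 𝓞 K, ∃ n : ℤ,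
    Algebra.trace ℚ K (w * (algebraMap (𝓞 K) K δ * algebraMap (𝓞 K) K γ)) = n := Iff.rfl

lemma fracOne_ne_zero (K : Type*) [Field K] [NumberField K] :
    (1 : FractionalIdeal (𝓞 K)⁰ K) ≠ 0 := by
  rw [← FractionalIdeal.coeIdeal_top, ne_eq, FractionalIdeal.coeIdeal_eq_zero]
  exact top_ne_bot

lemma mem_dual_one_iff {x : K} :
    x ∈ FractionalIdeal.dual ℤ ℚ (1 : FractionalIdeal (𝓞 K)⁰ K) ↔
      ∀ γ : 𝓞 K, ∃ n : ℤ, Algebra.trace ℚ K (x * algebraMap (𝓞 K) K γ) = n := by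
  rw [FractionalIdeal.mem_dual (fracOne_ne_zero K)]
  constructor
  · intro h γ
    have := h (algebraMap (𝓞 K) K γ) (by
      rw [FractionalIdeal.mem_one_iff]; exact ⟨γ, rfl⟩)
    obtain ⟨n, hn⟩ := this
    exact ⟨n, by rw [← Algebra.traceForm_apply, ← hn]; rfl⟩
  · intro h y hy
    rw [FractionalIdeal.mem_one_iff] at hy
    obtain ⟨γ, rfl⟩ := hy
    obtain ⟨n, hn⟩ := h γ
    exact ⟨n, by rw [Algebra.traceForm_apply, hn]; rfl⟩

lemma dual_one_mul_different :
    FractionalIdeal.dual ℤ ℚ (1 : FractionalIdeal (𝓞 K)⁰ K) *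
      (differentIdeal ℤ (𝓞 K) : FractionalIdeal (𝓞 K)⁰ K) = 1 := by
  rw [coeIdeal_differentIdeal ℤ ℚ K (𝓞 K)]
  exact mul_inv_cancel₀ (FractionalIdeal.dual_ne_zero ℤ ℚ (fracOne_ne_zero K))

lemma J_le_one (q : Ideal (𝓞 K)) (w : K)
    (hw : ∀ β ∈ q, ∃ n : ℤ, Algebra.trace ℚ K (w * algebraMap (𝓞 K) K β) = n) :
    FractionalIdeal.spanSingleton (𝓞 K)⁰ w * (q : FractionalIdeal (𝓞 K)⁰ K) *
        (differentIdeal ℤ (𝓞 K) : FractionalIdeal (𝓞 K)⁰ K) +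
      (q : FractionalIdeal (𝓞 K)⁰ K) ≤ 1 := by
  rw [← FractionalIdeal.sup_eq_add]
  refine sup_le ?_ FractionalIdeal.coeIdeal_le_one
  have h1 : FractionalIdeal.spanSingleton (𝓞 K)⁰ w * (q : FractionalIdeal (𝓞 K)⁰ K)
      ≤ FractionalIdeal.dual ℤ ℚ 1 := by
    rw [FractionalIdeal.mul_le]
    intro i hi j hj
    rw [FractionalIdeal.mem_spanSingleton] at hi
    obtain ⟨z, rfl⟩ := hi
    rw [FractionalIdeal.mem_coeIdeal] at hj
    obtain ⟨β, hβ, rfl⟩ := hj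
    rw [mem_dual_one_iff]
    intro γ
    obtain ⟨n, hn⟩ := hw (z * (β * γ))
      (Ideal.mul_mem_left _ _ (Ideal.mul_mem_right _ _ hβ))
    refine ⟨n, ?_⟩
    rw [← hn]
    congr 1
    rw [Algebra.smul_def]
    simp only [map_mul]
    ring
  calc FractionalIdeal.spanSingleton (𝓞 K)⁰ w * (q : FractionalIdeal (𝓞 K)⁰ K) *
        (differentIdeal ℤ (𝓞 K) : FractionalIdeal (𝓞 K)⁰ K)
      ≤ FractionalIdeal.dual ℤ ℚ 1 *
        (differentIdeal ℤ (𝓞 K) : FractionalIdeal (𝓞 K)⁰ K) :=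
        _root_.mul_le_mul_left h1 _
    _ = 1 := dual_one_mul_different

lemma kernel_mem (q : Ideal (𝓞 K)) (w : K) (J₀ : Ideal (𝓞 K))
    (hJ₀ : (J₀ : FractionalIdeal (𝓞 K)⁰ K) =
      FractionalIdeal.spanSingleton (𝓞 K)⁰ w * (q : FractionalIdeal (𝓞 K)⁰ K) *
        (differentIdeal ℤ (𝓞 K) : FractionalIdeal (𝓞 K)⁰ K) +
      (q : FractionalIdeal (𝓞 K)⁰ K))
    {δ u : 𝓞 K} (hδ : δ ∈ dualC K (2 * w)) (hu : u ∈ J₀) :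
    δ * (2 * u) ∈ q := by
  set a := algebraMap (𝓞 K) K with ha
  have hu' : a u ∈ (FractionalIdeal.spanSingleton (𝓞 K)⁰ w * (q : FractionalIdeal (𝓞 K)⁰ K) *
        (differentIdeal ℤ (𝓞 K) : FractionalIdeal (𝓞 K)⁰ K)) + (q : FractionalIdeal (𝓞 K)⁰ K) := by
    have : a u ∈ (J₀ : FractionalIdeal (𝓞 K)⁰ K) :=
      FractionalIdeal.mem_coeIdeal_of_mem _ hu
    rwa [hJ₀] at this
  rw [FractionalIdeal.mem_add] at hu'
  obtain ⟨v₁, hv₁, v₂, hv₂, hsum⟩ := hu'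
  have hX : FractionalIdeal.spanSingleton (𝓞 K)⁰ (a (2 * δ)) *
      (FractionalIdeal.spanSingleton (𝓞 K)⁰ w * (q : FractionalIdeal (𝓞 K)⁰ K) *
        (differentIdeal ℤ (𝓞 K) : FractionalIdeal (𝓞 K)⁰ K)) ≤ (q : FractionalIdeal (𝓞 K)⁰ K) := by
    have heq : FractionalIdeal.spanSingleton (𝓞 K)⁰ (a (2 * δ)) *
        (FractionalIdeal.spanSingleton (𝓞 K)⁰ w * (q : FractionalIdeal (𝓞 K)⁰ K) *
          (differentIdeal ℤ (𝓞 K) : FractionalIdeal (𝓞 K)⁰ K))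
        = (FractionalIdeal.spanSingleton (𝓞 K)⁰ (a (2 * δ) * w) *
            (differentIdeal ℤ (𝓞 K) : FractionalIdeal (𝓞 K)⁰ K)) *
          (q : FractionalIdeal (𝓞 K)⁰ K) := by
      rw [← FractionalIdeal.spanSingleton_mul_spanSingleton]
      ring
    rw [heq]
    have hY : FractionalIdeal.spanSingleton (𝓞 K)⁰ (a (2 * δ) * w) *
        (differentIdeal ℤ (𝓞 K) : FractionalIdeal (𝓞 K)⁰ K) ≤ 1 := by
      have hmem : a (2 * δ) * w ∈ FractionalIdeal.dual ℤ ℚ (1 : FractionalIdeal (𝓞 K)⁰ K) := by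
        rw [mem_dual_one_iff]
        intro γ
        obtain ⟨n, hn⟩ := mem_dualC_iff.mp hδ γ
        refine ⟨n, ?_⟩
        rw [← hn]
        congr 1
        simp only [map_mul, map_ofNat]
        ring
      calc FractionalIdeal.spanSingleton (𝓞 K)⁰ (a (2 * δ) * w) *
            (differentIdeal ℤ (𝓞 K) : FractionalIdeal (𝓞 K)⁰ K)
          ≤ FractionalIdeal.dual ℤ ℚ 1 *
            (differentIdeal ℤ (𝓞 K) : FractionalIdeal (𝓞 K)⁰ K) :=
            _root_.mul_le_mul_left
              (FractionalIdeal.spanSingleton_le_iff_mem.mpr hmem) _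
        _ = 1 := dual_one_mul_different
    calc FractionalIdeal.spanSingleton (𝓞 K)⁰ (a (2 * δ) * w) *
          (differentIdeal ℤ (𝓞 K) : FractionalIdeal (𝓞 K)⁰ K) * (q : FractionalIdeal (𝓞 K)⁰ K)
        ≤ 1 * (q : FractionalIdeal (𝓞 K)⁰ K) := _root_.mul_le_mul_left hY _
      _ = (q : FractionalIdeal (𝓞 K)⁰ K) := one_mul _
  have hfin : a (δ * (2 * u)) ∈ (q : FractionalIdeal (𝓞 K)⁰ K) := by
    have h1 : a (2 * δ) * v₁ ∈ (q : FractionalIdeal (𝓞 K)⁰ K) := by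
      apply hX
      exact FractionalIdeal.mul_mem_mul (FractionalIdeal.mem_spanSingleton_self _ _)
        hv₁
    have h2 : a (2 * δ) * v₂ ∈ (q : FractionalIdeal (𝓞 K)⁰ K) := by
      have : (2 * δ) • v₂ ∈ ((q : FractionalIdeal (𝓞 K)⁰ K) : Submodule (𝓞 K) K) :=
        Submodule.smul_mem _ _ hv₂
      rw [Algebra.smul_def] at this
      exact FractionalIdeal.mem_coe.mp this
    have : a (2 * δ) * v₁ + a (2 * δ) * v₂ ∈ (q : FractionalIdeal (𝓞 K)⁰ K) := by
      rw [← FractionalIdeal.mem_coe] at h1 h2 ⊢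
      exact Submodule.add_mem _ h1 h2
    rw [← mul_add, hsum] at this
    have heq : a (δ * (2 * u)) = a (2 * δ) * a u := by
      simp only [map_mul, ha, map_ofNat]
      ring
    rwa [heq]
  rw [FractionalIdeal.mem_coeIdeal] at hfin
  obtain ⟨x, hx, he⟩ := hfin
  rwa [← (IsFractionRing.injective (𝓞 K) K) he]

set_option maxHeartbeats 1000000 in
set_option synthInstance.maxHeartbeats 400000 in
lemma card_T_bound (hdeg : Module.finrank ℚ K = 2)
    (q : Ideal (𝓞 K)) (hq : q ≠ 0) (w : K) (J₀ : Ideal (𝓞 K)) (hJ₀ne : J₀ ≠ ⊥)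
    (hqc : q ≤ dualC K (2 * w))
    (hker : ∀ δ ∈ dualC K (2 * w), ∀ u ∈ J₀, δ * (2 * u) ∈ q) :
    Nat.card (Submodule.map (Submodule.mkQ q) (dualC K (2 * w) : Submodule (𝓞 K) (𝓞 K))) ≤
      4 * Ideal.absNorm J₀ := by
  set c := dualC K (2 * w) with hc
  have hmul : c * (Ideal.span {(2 : 𝓞 K)} * J₀) ≤ q := by
    rw [Ideal.mul_le]
    intro δ hδ t ht
    rw [Ideal.mem_span_singleton_mul] at ht
    obtain ⟨z, hz, rfl⟩ := ht
    exact hker δ hδ z hz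
  have hnorm2 : Ideal.absNorm (Ideal.span {(2 : 𝓞 K)}) = 4 := by
    rw [Ideal.absNorm_span_singleton]
    have h2 : (2 : 𝓞 K) = algebraMap ℤ (𝓞 K) 2 := by simp
    rw [h2, Algebra.norm_algebraMap_of_basis (RingOfIntegers.basis K)]
    have hcard : Fintype.card (Module.Free.ChooseBasisIndex ℤ (𝓞 K)) = 2 := by
      rw [← Module.finrank_eq_card_chooseBasisIndex, RingOfIntegers.rank, hdeg]
    rw [hcard]
    norm_num
  have hdvd : Ideal.absNorm q ∣
      Ideal.absNorm c * (4 * Ideal.absNorm J₀) := by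
    have := Ideal.absNorm_dvd_absNorm_of_le hmul
    rwa [_root_.map_mul Ideal.absNorm, _root_.map_mul Ideal.absNorm, hnorm2] at this
  have hcard : Nat.card (Submodule.map (Submodule.mkQ q) (c : Submodule (𝓞 K) (𝓞 K))) *
      Ideal.absNorm c = Ideal.absNorm q := by
    have := Submodule.card_quotient_mul_card_quotient (c : Submodule (𝓞 K) (𝓞 K))
      (q : Submodule (𝓞 K) (𝓞 K)) hqc
    rw [Ideal.absNorm_apply, Submodule.cardQuot_apply, Ideal.absNorm_apply,
      Submodule.cardQuot_apply]
    exact this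
  have hcne : Ideal.absNorm c ≠ 0 := by
    rw [ne_eq, Ideal.absNorm_eq_zero_iff]
    intro h
    exact hq (le_bot_iff.mp (h ▸ hqc))
  have hprod_ne : Ideal.absNorm c * (4 * Ideal.absNorm J₀) ≠ 0 := by
    have : Ideal.absNorm J₀ ≠ 0 := by
      rw [ne_eq, Ideal.absNorm_eq_zero_iff]
      exact hJ₀ne
    positivity
  have hle : Ideal.absNorm q ≤ Ideal.absNorm c * (4 * Ideal.absNorm J₀) :=
    Nat.le_of_dvd (Nat.pos_of_ne_zero hprod_ne) hdvd
  rw [← hcard] at hle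
  have hcpos : 0 < Ideal.absNorm c := Nat.pos_of_ne_zero hcne
  calc Nat.card (Submodule.map (Submodule.mkQ q) (c : Submodule (𝓞 K) (𝓞 K)))
      = Nat.card (Submodule.map (Submodule.mkQ q) (c : Submodule (𝓞 K) (𝓞 K))) *
        Ideal.absNorm c / Ideal.absNorm c := by
        rw [Nat.mul_div_cancel _ hcpos]
    _ ≤ Ideal.absNorm c * (4 * Ideal.absNorm J₀) / Ideal.absNorm c :=
        Nat.div_le_div_right hle
    _ = 4 * Ideal.absNorm J₀ := by
        rw [Nat.mul_div_cancel_left _ hcpos]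

end GaussSumAux

set_option maxHeartbeats 2000000 in
set_option synthInstance.maxHeartbeats 400000 in
/-- Lemma 2.1: bound for the quadratic exponential sum
`∑_{β mod q} e^{2πi Tr(wβ²)}` for `w` in the trace-dual of `q`. -/
theorem stmt_0 {K : Type*} [Field K] [NumberField K]
    (hdeg : Module.finrank ℚ K = 2)
    (himag : ∀ v : NumberField.InfinitePlace K, v.IsComplex)
    (ε : ℝ) (hε : 0 < ε) :
    ∃ C : ℝ, 0 < C ∧ ∀ (q : Ideal (𝓞 K)), q ≠ 0 → ∀ w : K,
      (∀ β ∈ q, ∃ n : ℤ, Algebra.trace ℚ K (w * algebraMap (𝓞 K) K β) = n) →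
      ∀ r : (𝓞 K ⧸ q) → 𝓞 K, (∀ x, Ideal.Quotient.mk q (r x) = x) →
      ‖∑ᶠ x : 𝓞 K ⧸ q,
          Complex.exp (2 * Real.pi * Complex.I *
            ((Algebra.trace ℚ K (w * algebraMap (𝓞 K) K (r x) ^ 2) : ℚ) : ℂ))‖
        ≤ C * ((FractionalIdeal.absNorm
              (FractionalIdeal.spanSingleton (𝓞 K)⁰ w * (q : FractionalIdeal (𝓞 K)⁰ K) *
                  (differentIdeal ℤ (𝓞 K) : FractionalIdeal (𝓞 K)⁰ K) +
                (q : FractionalIdeal (𝓞 K)⁰ K)) : ℝ) ^ ((1 : ℝ) / 2 - ε)) *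
          (Ideal.absNorm q : ℝ) ^ ((1 : ℝ) / 2 + ε) := by
  refine ⟨2, two_pos, ?_⟩
  intro q hq w hw r hr
  letI : Fintype (𝓞 K ⧸ q) := @Fintype.ofFinite _ (Ideal.finiteQuotientOfFreeOfNeBot q hq)
  set a : 𝓞 K →+* K := algebraMap (𝓞 K) K with ha
  set c : Ideal (𝓞 K) := dualC K (2 * w) with hc
  -- the fractional ideal J and its integral model J₀
  have hJ1 := J_le_one q w hw
  obtain ⟨J₀, hJ₀⟩ := FractionalIdeal.le_one_iff_exists_coeIdeal.mp hJ1
  have hqleJ : (q : FractionalIdeal (𝓞 K)⁰ K) ≤ (J₀ : FractionalIdeal (𝓞 K)⁰ K) := by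
    rw [hJ₀, ← FractionalIdeal.sup_eq_add]
    exact le_sup_right
  have hqJ₀ : q ≤ J₀ := (FractionalIdeal.coeIdeal_le_coeIdeal K).mp hqleJ
  have hJ₀ne : J₀ ≠ ⊥ := by
    intro h
    apply hq
    have := le_bot_iff.mp (h ▸ hqJ₀)
    simpa using this
  have habsJ : ((FractionalIdeal.absNorm
      (FractionalIdeal.spanSingleton (𝓞 K)⁰ w * (q : FractionalIdeal (𝓞 K)⁰ K) *
          (differentIdeal ℤ (𝓞 K) : FractionalIdeal (𝓞 K)⁰ K) +
        (q : FractionalIdeal (𝓞 K)⁰ K)) : ℚ) : ℝ) = (Ideal.absNorm J₀ : ℝ) := by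
    rw [← hJ₀, FractionalIdeal.coeIdeal_absNorm]
    norm_num
  -- q ≤ c
  have hqc : q ≤ c := by
    intro δ hδ
    rw [hc, mem_dualC_iff]
    intro γ
    obtain ⟨n, hn⟩ := hw (2 * (δ * γ))
      (Ideal.mul_mem_left _ _ (Ideal.mul_mem_right _ _ hδ))
    refine ⟨n, ?_⟩
    rw [← hn]
    congr 1
    simp only [map_mul, map_ofNat, ha]
    ring
  -- the subgroup T
  set T : Submodule (𝓞 K) (𝓞 K ⧸ q) :=
    Submodule.map (Submodule.mkQ q) (c : Submodule (𝓞 K) (𝓞 K)) with hT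
  have hTbound : Nat.card T ≤ 4 * Ideal.absNorm J₀ :=
    card_T_bound hdeg q hq w J₀ hJ₀ne hqc (fun δ hδ u hu => kernel_mem q w J₀ hJ₀ hδ hu)
  -- membership in T
  have hmk : ∀ z : 𝓞 K, Submodule.mkQ (q : Submodule (𝓞 K) (𝓞 K)) z = Ideal.Quotient.mk q z :=
    fun z => rfl
  have hmemT : ∀ d : 𝓞 K ⧸ q, d ∈ T ↔ r d ∈ c := by
    intro d
    constructor
    · rintro ⟨δ, hδ, hδd⟩
      have hsub : r d - δ ∈ q := by
        rw [← Ideal.Quotient.eq_zero_iff_mem, map_sub, hr d, ← hmk, hδd, sub_self]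
      have : r d = δ + (r d - δ) := by ring
      rw [this]
      exact c.add_mem hδ (hqc hsub)
    · intro h
      exact ⟨r d, h, by rw [hmk, hr d]⟩
  -- basic residue facts
  have hres : ∀ x y : 𝓞 K ⧸ q, r (x + y) - r x - r y ∈ q := by
    intro x y
    rw [← Ideal.Quotient.eq_zero_iff_mem, map_sub, map_sub, hr, hr, hr]
    ring
  -- the sum S
  set f : (𝓞 K ⧸ q) → ℂ := fun x => expT w (a (r x) ^ 2) with hf
  set S : ℂ := ∑ x : 𝓞 K ⧸ q, f x with hS
  have hfin : (∑ᶠ x : 𝓞 K ⧸ q, Complex.exp (2 * Real.pi * Complex.I *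
      ((Algebra.trace ℚ K (w * algebraMap (𝓞 K) K (r x) ^ 2) : ℚ) : ℂ))) = S := by
    rw [finsum_eq_sum_of_fintype]
    refine Finset.sum_congr rfl fun x _ => ?_
    rw [hf]
    simp only [expT_def, ha]
  -- key multiplicative identity
  have keyA : ∀ y d : 𝓞 K ⧸ q, f (y + d) * (starRingEnd ℂ) (f y)
      = expT w (a (r d) ^ 2) * expT (2 * w) (a (r d) * a (r y)) := by
    intro y d
    set η : 𝓞 K := r (y + d) - r y - r d with hη
    have hηq : η ∈ q := hres y d
    have hrd : r (y + d) = r y + r d + η := by rw [hη]; ring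
    have hdecomp : a (r (y + d)) ^ 2 + (- (a (r y) ^ 2))
        = a (r d) ^ 2 + 2 * (a (r d) * a (r y))
          + a (η * η + 2 * (η * r y) + 2 * (η * r d)) := by
      rw [hrd]
      simp only [map_add, map_mul, map_ofNat, ha]
      ring
    rw [hf, expT_conj, ← expT_add, hdecomp, expT_add, expT_add]
    have h1 : expT w (a (η * η + 2 * (η * r y) + 2 * (η * r d))) = 1 := by
      apply expT_int
      apply hw
      refine Ideal.add_mem _ (Ideal.add_mem _ ?_ ?_) ?_
      · exact Ideal.mul_mem_right _ _ hηq
      · exact Ideal.mul_mem_left _ _ (Ideal.mul_mem_right _ _ hηq)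
      · exact Ideal.mul_mem_left _ _ (Ideal.mul_mem_right _ _ hηq)
    have h2 : expT w (2 * (a (r d) * a (r y))) = expT (2 * w) (a (r d) * a (r y)) := by
      rw [expT_def, expT_def]
      congr 3
      ring
    rw [h1, h2, mul_one]
  -- the product S * conj S
  have hSS : S * (starRingEnd ℂ) S
      = ∑ d : 𝓞 K ⧸ q, expT w (a (r d) ^ 2) *
          (∑ y : 𝓞 K ⧸ q, expT (2 * w) (a (r d) * a (r y))) := by
    rw [hS, map_sum, Finset.sum_mul_sum, Finset.sum_comm]
    have hrow : ∀ y : 𝓞 K ⧸ q, (∑ x : 𝓞 K ⧸ q, f x * (starRingEnd ℂ) (f y))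
        = ∑ d : 𝓞 K ⧸ q, expT w (a (r d) ^ 2) * expT (2 * w) (a (r d) * a (r y)) := by
      intro y
      rw [← Fintype.sum_equiv (Equiv.addLeft y)
        (fun d => f (y + d) * (starRingEnd ℂ) (f y))
        (fun x => f x * (starRingEnd ℂ) (f y)) (fun d => rfl)]
      exact Finset.sum_congr rfl fun d _ => keyA y d
    rw [Finset.sum_congr rfl fun y _ => hrow y, Finset.sum_comm]
    exact Finset.sum_congr rfl fun d _ => (Finset.mul_sum _ _ _).symm
  -- evaluation of the inner sums
  have hinner_mem : ∀ d : 𝓞 K ⧸ q, d ∈ T →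
      (∑ y : 𝓞 K ⧸ q, expT (2 * w) (a (r d) * a (r y)))
        = (Fintype.card (𝓞 K ⧸ q) : ℂ) := by
    intro d hd
    have hrdc : r d ∈ c := (hmemT d).mp hd
    have : ∀ y : 𝓞 K ⧸ q, expT (2 * w) (a (r d) * a (r y)) = 1 := by
      intro y
      exact expT_int ((mem_dualC_iff.mp (hc ▸ hrdc)) (r y))
    rw [Finset.sum_congr rfl fun y _ => this y, Finset.sum_const, Finset.card_univ,
      nsmul_eq_mul, mul_one]
  have hinner_zero : ∀ d : 𝓞 K ⧸ q, d ∉ T →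
      (∑ y : 𝓞 K ⧸ q, expT (2 * w) (a (r d) * a (r y))) = 0 := by
    intro d hd
    have hrdc : r d ∉ c := fun h => hd ((hmemT d).mpr h)
    rw [hc, mem_dualC_iff] at hrdc
    push_neg at hrdc
    obtain ⟨γ₀, hγ₀⟩ := hrdc
    set z : ℂ := expT (2 * w) (a (r d) * a γ₀) with hz
    have hzne : z ≠ 1 := expT_ne_one (fun ⟨n, hn⟩ => hγ₀ n hn)
    set Sd : ℂ := ∑ y : 𝓞 K ⧸ q, expT (2 * w) (a (r d) * a (r y)) with hSdd
    have hshift : Sd = z * Sd := by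
      nth_rewrite 1 [hSdd]
      rw [← Fintype.sum_equiv (Equiv.addRight (Ideal.Quotient.mk q γ₀))
        (fun y => expT (2 * w) (a (r d) * a (r (y + Ideal.Quotient.mk q γ₀))))
        (fun y => expT (2 * w) (a (r d) * a (r y))) (fun y => rfl)]
      rw [Finset.mul_sum]
      refine Finset.sum_congr rfl fun y _ => ?_
      set η : 𝓞 K := r (y + Ideal.Quotient.mk q γ₀) - r y - γ₀ with hη
      have hηq : η ∈ q := by
        rw [hη, ← Ideal.Quotient.eq_zero_iff_mem, map_sub, map_sub, hr, hr]
        ring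
      have hrshift : r (y + Ideal.Quotient.mk q γ₀) = r y + γ₀ + η := by rw [hη]; ring
      have hdec : a (r d) * a (r (y + Ideal.Quotient.mk q γ₀))
          = a (r d) * a γ₀ + (a (r d) * a (r y) + a (r d) * a η) := by
        rw [hrshift]
        simp only [map_add, ha]
        ring
      rw [hdec, expT_add, expT_add]
      have hone : expT (2 * w) (a (r d) * a η) = 1 := by
        apply expT_int
        obtain ⟨n, hn⟩ := hw (2 * (r d * η)) (Ideal.mul_mem_left _ _
          (Ideal.mul_mem_left _ _ hηq))
        refine ⟨n, ?_⟩
        rw [← hn]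
        congr 1
        simp only [map_mul, map_ofNat, ha]
        ring
      rw [hone, mul_one, hz]
    have hzero : (1 - z) * Sd = 0 := by
      rw [sub_mul, one_mul, ← hshift, sub_self]
    rcases mul_eq_zero.mp hzero with h | h
    · exact absurd (sub_eq_zero.mp h).symm hzne
    · exact h
  -- putting things together: the squared bound
  rw [hfin]
  have hNq_ne : Ideal.absNorm q ≠ 0 := by
    rw [ne_eq, Ideal.absNorm_eq_zero_iff]
    exact hq
  have hNJ_ne : Ideal.absNorm J₀ ≠ 0 := by
    rw [ne_eq, Ideal.absNorm_eq_zero_iff]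
    exact hJ₀ne
  have hcardG : Fintype.card (𝓞 K ⧸ q) = Ideal.absNorm q := by
    rw [Ideal.absNorm_apply, Submodule.cardQuot_apply, Nat.card_eq_fintype_card]
  have hcardT : (Finset.univ.filter (fun d : 𝓞 K ⧸ q => d ∈ T)).card = Nat.card T := by
    rw [Nat.card_eq_fintype_card]
    rw [Fintype.card_subtype]
  set A : ℝ := (Ideal.absNorm J₀ : ℝ) with hA
  set n : ℝ := (Ideal.absNorm q : ℝ) with hn
  have hA1 : 1 ≤ A := by
    rw [hA]
    exact_mod_cast Nat.one_le_iff_ne_zero.mpr hNJ_ne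
  have hn1 : 1 ≤ n := by
    rw [hn]
    exact_mod_cast Nat.one_le_iff_ne_zero.mpr hNq_ne
  have hA0 : 0 < A := lt_of_lt_of_le one_pos hA1
  have hn0 : 0 < n := lt_of_lt_of_le one_pos hn1
  have hAn : A ≤ n := by
    rw [hA, hn]
    exact_mod_cast Nat.le_of_dvd (Nat.pos_of_ne_zero hNq_ne)
      (Ideal.absNorm_dvd_absNorm_of_le hqJ₀)
  have habs2 : ‖S‖ ^ 2 ≤ 4 * A * n := by
    have h1 : ‖S‖ ^ 2 = ‖S * (starRingEnd ℂ) S‖ := by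
      rw [norm_mul, Complex.norm_conj, sq]
    rw [h1, hSS]
    calc ‖∑ d : 𝓞 K ⧸ q, expT w (a (r d) ^ 2) *
            (∑ y : 𝓞 K ⧸ q, expT (2 * w) (a (r d) * a (r y)))‖
        ≤ ∑ d : 𝓞 K ⧸ q, ‖expT w (a (r d) ^ 2) *
            (∑ y : 𝓞 K ⧸ q, expT (2 * w) (a (r d) * a (r y)))‖ :=
          norm_sum_le _ _
      _ = ∑ d : 𝓞 K ⧸ q, ‖∑ y : 𝓞 K ⧸ q, expT (2 * w) (a (r d) * a (r y))‖ := by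
          refine Finset.sum_congr rfl fun d _ => ?_
          rw [norm_mul, expT_abs, one_mul]
      _ ≤ ∑ d : 𝓞 K ⧸ q, if d ∈ T then (Fintype.card (𝓞 K ⧸ q) : ℝ) else 0 := by
          refine Finset.sum_le_sum fun d _ => ?_
          by_cases hd : d ∈ T
          · rw [hinner_mem d hd, if_pos hd]
            simp
          · rw [hinner_zero d hd, if_neg hd]
            simp
      _ = ((Finset.univ.filter (fun d : 𝓞 K ⧸ q => d ∈ T)).card : ℝ) *
            (Fintype.card (𝓞 K ⧸ q) : ℝ) := by
          rw [Finset.sum_ite, Finset.sum_const, Finset.sum_const_zero, add_zero,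
            nsmul_eq_mul]
      _ ≤ 4 * A * n := by
          rw [hcardT, hcardG, hA, hn]
          have h4 : (Nat.card T : ℝ) ≤ 4 * (Ideal.absNorm J₀ : ℝ) := by
            exact_mod_cast hTbound
          have := mul_le_mul_of_nonneg_right h4 (Nat.cast_nonneg (Ideal.absNorm q))
          calc (Nat.card T : ℝ) * (Ideal.absNorm q : ℝ)
              ≤ 4 * (Ideal.absNorm J₀ : ℝ) * (Ideal.absNorm q : ℝ) := this
            _ = 4 * (Ideal.absNorm J₀ : ℝ) * (Ideal.absNorm q : ℝ) := by ring
  have hS_le : ‖S‖ ≤ 2 * A ^ ((1 : ℝ) / 2) * n ^ ((1 : ℝ) / 2) := by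
    have hsq : (2 * A ^ ((1 : ℝ) / 2) * n ^ ((1 : ℝ) / 2)) ^ 2 = 4 * A * n := by
      have hA' : A ^ ((1 : ℝ) / 2) * A ^ ((1 : ℝ) / 2) = A := by
        rw [← Real.rpow_add hA0]
        norm_num
      have hn' : n ^ ((1 : ℝ) / 2) * n ^ ((1 : ℝ) / 2) = n := by
        rw [← Real.rpow_add hn0]
        norm_num
      calc (2 * A ^ ((1 : ℝ) / 2) * n ^ ((1 : ℝ) / 2)) ^ 2
          = 4 * (A ^ ((1 : ℝ) / 2) * A ^ ((1 : ℝ) / 2)) *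
            (n ^ ((1 : ℝ) / 2) * n ^ ((1 : ℝ) / 2)) := by ring
        _ = 4 * A * n := by rw [hA', hn']
    have h2 : ‖S‖ ^ 2 ≤ (2 * A ^ ((1 : ℝ) / 2) * n ^ ((1 : ℝ) / 2)) ^ 2 := by
      rw [hsq]
      exact habs2
    have hnonneg : (0 : ℝ) ≤ 2 * A ^ ((1 : ℝ) / 2) * n ^ ((1 : ℝ) / 2) := by positivity
    have := Real.sqrt_le_sqrt h2
    rwa [Real.sqrt_sq (norm_nonneg S), Real.sqrt_sq hnonneg] at this
  rw [habsJ]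
  refine le_trans hS_le ?_
  have hsplit : A ^ ((1 : ℝ) / 2) = A ^ ((1 : ℝ) / 2 - ε) * A ^ ε := by
    rw [← Real.rpow_add hA0]
    ring_nf
  have hAε : A ^ ε ≤ n ^ ε := Real.rpow_le_rpow (le_of_lt hA0) hAn (le_of_lt hε)
  have hcollect : n ^ ε * n ^ ((1 : ℝ) / 2) = n ^ ((1 : ℝ) / 2 + ε) := by
    rw [← Real.rpow_add hn0]
    ring_nf
  calc 2 * A ^ ((1 : ℝ) / 2) * n ^ ((1 : ℝ) / 2)
      = 2 * A ^ ((1 : ℝ) / 2 - ε) * (A ^ ε * n ^ ((1 : ℝ) / 2)) := by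
        rw [hsplit]; ring
    _ ≤ 2 * A ^ ((1 : ℝ) / 2 - ε) * (n ^ ε * n ^ ((1 : ℝ) / 2)) := by
        have h1 : (0 : ℝ) ≤ 2 * A ^ ((1 : ℝ) / 2 - ε) := by positivity
        have h2 : A ^ ε * n ^ ((1 : ℝ) / 2) ≤ n ^ ε * n ^ ((1 : ℝ) / 2) :=
          mul_le_mul_of_nonneg_right hAε (by positivity)
        exact mul_le_mul_of_nonneg_left h2 h1
    _ = 2 * A ^ ((1 : ℝ) / 2 - ε) * n ^ ((1 : ℝ) / 2 + ε) := by rw [hcollect]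
end

section
/- Let K ⊂ ℂ be an imaginary quadratic field and let a be a nonzero fractional ideal of K, viewed as a lattice in ℂ ≅ ℝ². Then there exists an ℝ-linear map φ : ℂ → ℂ with φ(ℤ[i]) = a such that for all v ∈ ℂ one has c₁ · N(a) · |v|² ≤ |φ(v)|² ≤ c₂ · N(a) · |v|², where c₁, c₂ > 0 are constants depending only on K, and N(a) is the absolute norm of a. -/
open NumberField
open scoped nonZeroDivisors Classical

theorem norm_normSq {K : Type*} [Field K] [NumberField K] (ι : K →+* ℂ)
    (hdeg : Module.finrank ℚ K = 2)
    (himag : ∀ v : NumberField.InfinitePlace K, v.IsComplex) (t : K) :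
    ((|Algebra.norm ℚ t| : ℚ) : ℝ) = Complex.normSq (ι t) := by
  have hne : (starRingEnd ℂ).comp ι ≠ ι := by
    intro h
    have : (NumberField.InfinitePlace.mk ι).IsReal :=
      NumberField.InfinitePlace.isReal_mk_iff.mpr h
    exact NumberField.InfinitePlace.not_isReal_iff_isComplex.mpr (himag _) this
  have hcard : Fintype.card (K →+* ℂ) = 2 := by
    rw [NumberField.Embeddings.card K ℂ, hdeg]
  have huniv : (Finset.univ : Finset (K →+* ℂ)) = {ι, (starRingEnd ℂ).comp ι} := by
    symm
    apply Finset.eq_univ_of_card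
    rw [Finset.card_insert_of_notMem (by simpa using hne.symm), Finset.card_singleton, hcard]
  have h1 : (algebraMap ℚ ℂ) (Algebra.norm ℚ t) = ∏ σ : K →ₐ[ℚ] ℂ, σ t :=
    Algebra.norm_eq_prod_embeddings ℚ ℂ t
  have h2 : ∏ σ : K →ₐ[ℚ] ℂ, σ t = ∏ σ : K →+* ℂ, σ t := by
    rw [← Fintype.prod_equiv (RingHom.equivRatAlgHom K ℂ) (fun σ : K →+* ℂ => σ t)
      (fun σ : K →ₐ[ℚ] ℂ => σ t) (fun σ => rfl)]
  have h3 : ∏ σ : K →+* ℂ, σ t = ι t * (starRingEnd ℂ) (ι t) := by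
    rw [huniv, Finset.prod_pair hne.symm]
    rfl
  have hc : ((Algebra.norm ℚ t : ℚ) : ℂ) = (Complex.normSq (ι t) : ℂ) := by
    rw [show ((Algebra.norm ℚ t : ℚ) : ℂ) = (algebraMap ℚ ℂ) (Algebra.norm ℚ t) from rfl,
      h1, h2, h3, Complex.mul_conj]
  have hr : ((Algebra.norm ℚ t : ℚ) : ℝ) = Complex.normSq (ι t) := by exact_mod_cast hc
  have hnn : (0:ℚ) ≤ Algebra.norm ℚ t := by
    have : ((0:ℚ):ℝ) ≤ ((Algebra.norm ℚ t : ℚ) : ℝ) := by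
      rw [hr]; exact_mod_cast Complex.normSq_nonneg (ι t)
    exact_mod_cast this
  rw [abs_of_nonneg hnn]; exact hr

theorem rat_of_real {K : Type*} [Field K] [NumberField K] (ι : K →+* ℂ)
    (hdeg : Module.finrank ℚ K = 2)
    (himag : ∀ v : NumberField.InfinitePlace K, v.IsComplex) (γ : K)
    (hγ : (ι γ).im = 0) : ∃ q : ℚ, algebraMap ℚ K q = γ := by
  set F : IntermediateField ℚ K :=
    { carrier := {x : K | (ι x).im = 0}
      mul_mem' := fun {a b} ha hb => by
        simp only [Set.mem_setOf_eq, map_mul, Complex.mul_im] at *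
        rw [ha, hb]; ring
      one_mem' := by simp [Set.mem_setOf_eq]
      add_mem' := fun {a b} ha hb => by
        simp only [Set.mem_setOf_eq, map_add, Complex.add_im] at *
        rw [ha, hb]; ring
      zero_mem' := by simp [Set.mem_setOf_eq]
      algebraMap_mem' := fun q => by
        show (ι ((algebraMap ℚ K) q)).im = 0
        rw [show (algebraMap ℚ K) q = (q : K) from rfl, map_ratCast]
        simp
      inv_mem' := fun a ha => by
        simp only [Set.mem_setOf_eq, map_inv₀, Complex.inv_im] at *
        rw [ha]; simp } with hF
  have hmem : ∀ x : K, x ∈ F ↔ (ι x).im = 0 := fun x => Iff.rfl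
  have hFne : F ≠ ⊤ := by
    intro h
    have hall : ∀ x : K, (ι x).im = 0 := fun x =>
      (hmem x).mp (h ▸ IntermediateField.mem_top)
    have : (starRingEnd ℂ).comp ι = ι := by
      ext x
      exact Complex.conj_eq_iff_im.mpr (hall x)
    exact NumberField.InfinitePlace.not_isReal_iff_isComplex.mpr (himag _)
      (NumberField.InfinitePlace.isReal_mk_iff.mpr this)
  have hfin : Module.finrank ℚ F * Module.finrank F K = 2 := by
    rw [Module.finrank_mul_finrank ℚ F K, hdeg]
  have hdvd : Module.finrank ℚ F ∣ 2 := Dvd.intro _ hfin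
  have hbot : F = ⊥ := by
    rw [← IntermediateField.finrank_eq_one_iff]
    rcases (Nat.Prime.eq_one_or_self_of_dvd Nat.prime_two _ hdvd) with h | h
    · exact h
    · exfalso
      apply hFne
      apply IntermediateField.eq_of_le_of_finrank_le le_top
      rw [IntermediateField.finrank_top', hdeg, h]
  have hγF : γ ∈ F := (hmem γ).mpr hγ
  rw [hbot, IntermediateField.mem_bot] at hγF
  obtain ⟨q, hq⟩ := hγF
  exact ⟨q, hq⟩

theorem normSq_cl_bound (f : ℂ →L[ℝ] ℂ) (v : ℂ) :
    Complex.normSq (f v) ≤ (max ‖f‖ 1)^2 * Complex.normSq v := by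
  have h1 : ‖f v‖ ≤ max ‖f‖ 1 * ‖v‖ := by
    refine le_trans (f.le_opNorm v) ?_
    gcongr
    exact le_max_left _ _
  have h2 : Complex.normSq (f v) = ‖f v‖^2 := by
    rw [Complex.normSq_eq_norm_sq]
  have h3 : Complex.normSq v = ‖v‖^2 := by
    rw [Complex.normSq_eq_norm_sq]
  rw [h2, h3]
  calc ‖f v‖^2 ≤ (max ‖f‖ 1 * ‖v‖)^2 := by
        apply pow_le_pow_left₀ (norm_nonneg _) h1
    _ = (max ‖f‖ 1)^2 * ‖v‖^2 := by ring

theorem per_unit {K : Type*} [Field K] [NumberField K] (ι : K →+* ℂ)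
    (hdeg : Module.finrank ℚ K = 2)
    (himag : ∀ v : NumberField.InfinitePlace K, v.IsComplex)
    (J : (FractionalIdeal (𝓞 K)⁰ K)ˣ) :
    ∃ φ : ℂ →ₗ[ℝ] ℂ, ∃ c₁ c₂ : ℝ, 0 < c₁ ∧ 0 < c₂ ∧
      φ '' {z : ℂ | ∃ m n : ℤ, z = (m : ℂ) + (n : ℂ) * Complex.I} =
        ι '' (((J : FractionalIdeal (𝓞 K)⁰ K) : Submodule (𝓞 K) K) : Set K) ∧
      ∀ v : ℂ, c₁ * Complex.normSq v ≤ Complex.normSq (φ v) ∧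
        Complex.normSq (φ v) ≤ c₂ * Complex.normSq v := by
  classical
  -- the basis
  have hcard : Fintype.card (Module.Free.ChooseBasisIndex ℤ
      (J : FractionalIdeal (𝓞 K)⁰ K)) = 2 := by
    rw [← Module.finrank_eq_card_chooseBasisIndex, fractionalIdeal_rank,
      RingOfIntegers.rank, hdeg]
  let e := Fintype.equivFinOfCardEq hcard
  let B : Module.Basis (Fin 2) ℚ K := (basisOfFractionalIdeal K J).reindex e
  have hBmem : ∀ x : K, x ∈ Submodule.span ℤ (Set.range B) ↔
      x ∈ ((J : FractionalIdeal (𝓞 K)⁰ K) : Submodule (𝓞 K) K) := by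
    intro x
    rw [show Set.range B = Set.range (basisOfFractionalIdeal K J) from
      Module.Basis.range_reindex _ e]
    exact mem_span_basisOfFractionalIdeal K
  set A : Fin 2 → ℂ := fun i => ι (B i) with hA
  have hAne : ∀ i, A i ≠ 0 := fun i => by
    simp only [hA]
    exact fun h => B.ne_zero i (by
      have := ι.injective (h.trans (map_zero ι).symm)
      exact this)
  -- linear independence
  have hli : LinearIndependent ℝ ![A 0, A 1] := by
    rw [LinearIndependent.pair_iff]
    intro s t hst
    by_cases hs : s = 0
    · subst hs
      rw [zero_smul, zero_add] at hst
      exact ⟨rfl, by simpa [hAne 1] using smul_eq_zero.mp hst⟩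
    · exfalso
      -- A 0 = (-t/s) • A 1
      have hs' : (s : ℂ) ≠ 0 := by exact_mod_cast hs
      have h0 : A 0 = ((-t/s : ℝ) : ℂ) * A 1 := by
        have hst' : (s:ℂ) * A 0 = -((t:ℂ) * A 1) := by
          have : s • A 0 = -(t • A 1) := by linear_combination hst
          rwa [Complex.real_smul, Complex.real_smul] at this
        rw [Complex.ofReal_div, Complex.ofReal_neg]
        field_simp
        linear_combination hst'
      have him : (ι (B 0 / B 1)).im = 0 := by
        rw [map_div₀]
        rw [show ι (B 0) = A 0 from rfl, show ι (B 1) = A 1 from rfl, h0,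
          mul_div_assoc, div_self (hAne 1), mul_one]
        simp
      obtain ⟨q, hq⟩ := rat_of_real ι hdeg himag _ him
      have hB1 : B 0 = algebraMap ℚ K q * B 1 := by
        rw [hq, div_mul_cancel₀ _ (B.ne_zero 1)]
      have := congrArg (fun x => B.repr x 0) hB1
      simp only [Module.Basis.repr_self] at this
      rw [show algebraMap ℚ K q * B 1 = q • B 1 from (Algebra.smul_def q (B 1)).symm,
        map_smul] at this
      simp [Finsupp.single_apply] at this
  -- basis of ℂ
  have hfr : Fintype.card (Fin 2) = Module.finrank ℝ ℂ := by
    simp [Complex.finrank_real_complex]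
  let B2 : Module.Basis (Fin 2) ℝ ℂ := basisOfLinearIndependentOfCardEqFinrank hli hfr
  have hB2 : ∀ i, B2 i = ![A 0, A 1] i := fun i => by
    rw [coe_basisOfLinearIndependentOfCardEqFinrank]
  let φe : ℂ ≃ₗ[ℝ] ℂ := Complex.basisOneI.equiv B2 (Equiv.refl _)
  have hφ1 : φe 1 = A 0 := by
    have := Complex.basisOneI.equiv_apply 0 B2 (Equiv.refl _)
    simpa [Complex.coe_basisOneI, hB2 0] using this
  have hφI : φe Complex.I = A 1 := by
    have := Complex.basisOneI.equiv_apply 1 B2 (Equiv.refl _)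
    simpa [Complex.coe_basisOneI, hB2 1] using this
  have hφ : ∀ v : ℂ, φe v = v.re • A 0 + v.im • A 1 := by
    intro v
    have hv : v = v.re • (1 : ℂ) + v.im • Complex.I := by
      simp [Complex.real_smul, Complex.re_add_im]
    rw [hv]  -- careful: rewrites everywhere
    rw [map_add, map_smul, map_smul, hφ1, hφI]
    simp [Complex.real_smul]
  have hφz : ∀ m n : ℤ, φe ((m:ℂ) + (n:ℂ) * Complex.I) = ι (m • B 0 + n • B 1) := by
    intro m n
    rw [hφ]
    have hre : ((m:ℂ) + (n:ℂ) * Complex.I).re = (m:ℝ) := by simp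
    have him : ((m:ℂ) + (n:ℂ) * Complex.I).im = (n:ℝ) := by simp
    rw [hre, him, map_add, map_zsmul, map_zsmul]
    simp only [zsmul_eq_mul, Complex.real_smul, hA]
    push_cast
    ring
  refine ⟨φe.toLinearMap, ?_⟩
  have himage : φe.toLinearMap '' {z : ℂ | ∃ m n : ℤ, z = (m : ℂ) + (n : ℂ) * Complex.I} =
      ι '' (((J : FractionalIdeal (𝓞 K)⁰ K) : Submodule (𝓞 K) K) : Set K) := by
    ext w
    constructor
    · rintro ⟨z, ⟨m, n, rfl⟩, rfl⟩
      refine ⟨m • B 0 + n • B 1, ?_, (hφz m n).symm⟩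
      have : (m • B 0 + n • B 1) ∈ Submodule.span ℤ (Set.range B) := by
        exact Submodule.add_mem _
          (Submodule.smul_mem _ m (Submodule.subset_span (Set.mem_range_self 0)))
          (Submodule.smul_mem _ n (Submodule.subset_span (Set.mem_range_self 1)))
      exact (hBmem _).mp this
    · rintro ⟨x, hx, rfl⟩
      have hx' : x ∈ Submodule.span ℤ (Set.range B) := (hBmem x).mpr hx
      obtain ⟨c, hc⟩ := (Submodule.mem_span_range_iff_exists_fun ℤ).mp hx'
      rw [Fin.sum_univ_two] at hc
      refine ⟨(c 0 : ℂ) + (c 1 : ℂ) * Complex.I, ⟨c 0, c 1, rfl⟩, ?_⟩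
      show φe _ = ι x
      rw [hφz (c 0) (c 1), hc]
  -- bounds
  let e' : ℂ ≃L[ℝ] ℂ := φe.toContinuousLinearEquiv
  set M₁ : ℝ := max ‖((e'.symm : ℂ ≃L[ℝ] ℂ) : ℂ →L[ℝ] ℂ)‖ 1 with hM₁
  set M₂ : ℝ := max ‖((e' : ℂ ≃L[ℝ] ℂ) : ℂ →L[ℝ] ℂ)‖ 1 with hM₂
  have hM₁pos : 0 < M₁ := lt_of_lt_of_le one_pos (le_max_right _ _)
  have hM₂pos : 0 < M₂ := lt_of_lt_of_le one_pos (le_max_right _ _)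
  refine ⟨(M₁^2)⁻¹, M₂^2, by positivity, by positivity, himage, fun v => ?_⟩
  have happ : ∀ w : ℂ, ((e' : ℂ ≃L[ℝ] ℂ) : ℂ →L[ℝ] ℂ) w = φe w := fun w => rfl
  have happs : ((e'.symm : ℂ ≃L[ℝ] ℂ) : ℂ →L[ℝ] ℂ) (φe v) = v := by
    show e'.symm (e' v) = v
    exact e'.symm_apply_apply v
  constructor
  · have hb := normSq_cl_bound ((e'.symm : ℂ ≃L[ℝ] ℂ) : ℂ →L[ℝ] ℂ) (φe v)
    rw [happs, ← hM₁] at hb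
    have h2 : (M₁^2)⁻¹ * Complex.normSq v ≤ (M₁^2)⁻¹ * (M₁^2 * Complex.normSq (φe v)) := by
      apply mul_le_mul_of_nonneg_left hb (by positivity)
    rwa [inv_mul_cancel_left₀ (by positivity)] at h2
  · have hb := normSq_cl_bound ((e' : ℂ ≃L[ℝ] ℂ) : ℂ →L[ℝ] ℂ) v
    rw [happ, ← hM₂] at hb
    exact hb

/-- Lemma 2.3: a fractional ideal `a` of an imaginary quadratic field
`K ⊂ ℂ` is the image of `ℤ[i]` under an `ℝ`-linear map `φ : ℂ → ℂ` satisfying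
`c₁ N(a) |v|² ≤ |φ(v)|² ≤ c₂ N(a) |v|²` with constants depending only on `K`. -/
theorem stmt_2 {K : Type*} [Field K] [NumberField K] (ι : K →+* ℂ)
    (hdeg : Module.finrank ℚ K = 2)
    (himag : ∀ v : NumberField.InfinitePlace K, v.IsComplex) :
    ∃ c₁ c₂ : ℝ, 0 < c₁ ∧ 0 < c₂ ∧
      ∀ a : FractionalIdeal (𝓞 K)⁰ K, a ≠ 0 →
        ∃ φ : ℂ →ₗ[ℝ] ℂ,
          φ '' {z : ℂ | ∃ m n : ℤ, z = (m : ℂ) + (n : ℂ) * Complex.I} =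
            ι '' ((a : Submodule (𝓞 K) K) : Set K) ∧
          ∀ v : ℂ,
            c₁ * (FractionalIdeal.absNorm a : ℝ) * Complex.normSq v ≤ Complex.normSq (φ v) ∧
            Complex.normSq (φ v) ≤ c₂ * (FractionalIdeal.absNorm a : ℝ) * Complex.normSq v := by
  classical
  set Q := (FractionalIdeal (𝓞 K)⁰ K)ˣ ⧸ (toPrincipalIdeal (𝓞 K) K).range with hQ
  have : Finite Q := Finite.of_equiv _ (ClassGroup.equiv K).toEquiv
  have : Fintype Q := Fintype.ofFinite _
  choose φf c₁f c₂f hc₁ hc₂ himg hbd using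
    fun q : Q => per_unit ι hdeg himag (Quotient.out q)
  -- norms of representatives
  set NJ : Q → ℝ := fun q => (FractionalIdeal.absNorm ((Quotient.out q : (FractionalIdeal (𝓞 K)⁰ K)ˣ) : FractionalIdeal (𝓞 K)⁰ K) : ℝ) with hNJ
  have hNJpos : ∀ q, 0 < NJ q := by
    intro q
    have h0 : ((Quotient.out q : (FractionalIdeal (𝓞 K)⁰ K)ˣ) : FractionalIdeal (𝓞 K)⁰ K) ≠ 0 :=
      Units.ne_zero _
    have h1 : FractionalIdeal.absNorm ((Quotient.out q : (FractionalIdeal (𝓞 K)⁰ K)ˣ) : FractionalIdeal (𝓞 K)⁰ K) ≠ 0 :=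
      fun h => h0 (FractionalIdeal.absNorm_eq_zero_iff.mp h)
    have h2 := FractionalIdeal.absNorm_nonneg ((Quotient.out q : (FractionalIdeal (𝓞 K)⁰ K)ˣ) : FractionalIdeal (𝓞 K)⁰ K)
    have : (0:ℚ) < FractionalIdeal.absNorm ((Quotient.out q : (FractionalIdeal (𝓞 K)⁰ K)ˣ) : FractionalIdeal (𝓞 K)⁰ K) := lt_of_le_of_ne h2 (Ne.symm h1)
    show (0:ℝ) < ((FractionalIdeal.absNorm ((Quotient.out q : (FractionalIdeal (𝓞 K)⁰ K)ˣ) : FractionalIdeal (𝓞 K)⁰ K) : ℚ) : ℝ)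
    exact_mod_cast this
  have hQne : (Finset.univ : Finset Q).Nonempty := Finset.univ_nonempty
  set c₁ : ℝ := (Finset.univ : Finset Q).inf' hQne (fun q => c₁f q / NJ q) with hc₁def
  set c₂ : ℝ := (Finset.univ : Finset Q).sup' hQne (fun q => c₂f q / NJ q) with hc₂def
  have hc₁pos : 0 < c₁ := by
    rw [hc₁def, Finset.lt_inf'_iff]
    exact fun q _ => div_pos (hc₁ q) (hNJpos q)
  have hc₂pos : 0 < c₂ := by
    obtain ⟨q0, _⟩ := hQne
    calc (0:ℝ) < c₂f q0 / NJ q0 := div_pos (hc₂ q0) (hNJpos q0)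
      _ ≤ c₂ := Finset.le_sup' (fun q => c₂f q / NJ q) (Finset.mem_univ q0)
  refine ⟨c₁, c₂, hc₁pos, hc₂pos, fun a ha => ?_⟩
  -- decompose a
  set Ia : (FractionalIdeal (𝓞 K)⁰ K)ˣ := Units.mk0 a ha with hIa
  set q : Q := QuotientGroup.mk Ia with hq
  set J : (FractionalIdeal (𝓞 K)⁰ K)ˣ := Quotient.out q with hJ
  have hmk : (QuotientGroup.mk J : Q) = QuotientGroup.mk Ia := by
    rw [hJ, hq]
    exact QuotientGroup.out_eq' _
  obtain ⟨x, hx⟩ : ∃ x : Kˣ, toPrincipalIdeal (𝓞 K) K x = J⁻¹ * Ia := by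
    have := QuotientGroup.eq.mp hmk
    exact this
  have hax : a = FractionalIdeal.spanSingleton (𝓞 K)⁰ (x : K) *
      (J : FractionalIdeal (𝓞 K)⁰ K) := by
    have : J * toPrincipalIdeal (𝓞 K) K x = Ia := by
      rw [hx, ← mul_assoc, mul_inv_cancel, one_mul]
    have := congrArg (fun u : (FractionalIdeal (𝓞 K)⁰ K)ˣ => (u : FractionalIdeal (𝓞 K)⁰ K)) this
    simp only [Units.val_mul, coe_toPrincipalIdeal] at this
    rw [Units.val_mk0] at this
    rw [← this, mul_comm]
  have hxne : (ι (x : K)) ≠ 0 := by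
    simp only [ne_eq, map_eq_zero]
    exact x.ne_zero
  have hNt : (0:ℝ) < Complex.normSq (ι (x : K)) := by
    rcases (Complex.normSq_pos).mpr hxne with h
    exact h
  -- norm relation
  have hnorm : (FractionalIdeal.absNorm a : ℝ) = Complex.normSq (ι (x : K)) * NJ q := by
    rw [hax, map_mul, FractionalIdeal.absNorm_span_singleton, Rat.cast_mul,
      norm_normSq ι hdeg himag (x : K)]
  -- the map
  refine ⟨(LinearMap.mulLeft ℝ (ι (x : K))).comp (φf q), ?_, fun v => ?_⟩
  · -- image
    rw [show ⇑((LinearMap.mulLeft ℝ (ι (x : K))).comp (φf q)) =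
        (fun w => ι (x : K) * w) ∘ ⇑(φf q) from rfl, Set.image_comp, himg q]
    ext w
    constructor
    · rintro ⟨u, ⟨y, hy, rfl⟩, rfl⟩
      refine ⟨(x : K) * y, ?_, by simp [map_mul]⟩
      show ((x:K) * y) ∈ (a : Submodule (𝓞 K) K)
      rw [hax, FractionalIdeal.coe_mul, FractionalIdeal.coe_spanSingleton]
      exact Submodule.mem_span_singleton_mul.mpr ⟨y, hy, rfl⟩
    · rintro ⟨y, hy, rfl⟩
      have hy' : y ∈ ((FractionalIdeal.spanSingleton (𝓞 K)⁰ (x : K) *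
          (J : FractionalIdeal (𝓞 K)⁰ K) : FractionalIdeal (𝓞 K)⁰ K) : Submodule (𝓞 K) K) := by
        rw [← hax]; exact hy
      rw [FractionalIdeal.coe_mul, FractionalIdeal.coe_spanSingleton] at hy'
      obtain ⟨z, hz, rfl⟩ := Submodule.mem_span_singleton_mul.mp hy'
      exact ⟨ι z, ⟨z, hz, rfl⟩, by simp [map_mul]⟩
  · -- bounds
    have happ : ((LinearMap.mulLeft ℝ (ι (x : K))).comp (φf q)) v = ι (x : K) * (φf q) v := rfl
    rw [happ, map_mul]
    obtain ⟨hlo, hhi⟩ := hbd q v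
    have h₁le : c₁ ≤ c₁f q / NJ q := Finset.inf'_le _ (Finset.mem_univ q)
    have h₂le : c₂f q / NJ q ≤ c₂ := Finset.le_sup' (fun q => c₂f q / NJ q) (Finset.mem_univ q)
    have hNJq := hNJpos q
    have hnv := Complex.normSq_nonneg v
    constructor
    · rw [hnorm]
      have e1 : c₁ * (Complex.normSq (ι (x:K)) * NJ q) ≤ c₁f q * Complex.normSq (ι (x:K)) := by
        have := mul_le_mul_of_nonneg_right h₁le (le_of_lt (mul_pos hNt hNJq))
        calc c₁ * (Complex.normSq (ι (x:K)) * NJ q)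
            ≤ (c₁f q / NJ q) * (Complex.normSq (ι (x:K)) * NJ q) := by
              apply mul_le_mul_of_nonneg_right h₁le (le_of_lt (mul_pos hNt hNJq))
          _ = c₁f q * Complex.normSq (ι (x:K)) := by field_simp
      calc c₁ * (Complex.normSq (ι (x:K)) * NJ q) * Complex.normSq v
          ≤ (c₁f q * Complex.normSq (ι (x:K))) * Complex.normSq v := by
            apply mul_le_mul_of_nonneg_right e1 hnv
        _ = Complex.normSq (ι (x:K)) * (c₁f q * Complex.normSq v) := by ring
        _ ≤ Complex.normSq (ι (x:K)) * Complex.normSq ((φf q) v) := by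
            apply mul_le_mul_of_nonneg_left hlo (le_of_lt hNt)
    · rw [hnorm]
      have e2 : c₂f q * Complex.normSq (ι (x:K)) ≤ c₂ * (Complex.normSq (ι (x:K)) * NJ q) := by
        calc c₂f q * Complex.normSq (ι (x:K))
            = (c₂f q / NJ q) * (Complex.normSq (ι (x:K)) * NJ q) := by field_simp
          _ ≤ c₂ * (Complex.normSq (ι (x:K)) * NJ q) := by
              apply mul_le_mul_of_nonneg_right h₂le (le_of_lt (mul_pos hNt hNJq))
      calc Complex.normSq (ι (x:K)) * Complex.normSq ((φf q) v)
          ≤ Complex.normSq (ι (x:K)) * (c₂f q * Complex.normSq v) := by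
            apply mul_le_mul_of_nonneg_left hhi (le_of_lt hNt)
        _ = (c₂f q * Complex.normSq (ι (x:K))) * Complex.normSq v := by ring
        _ ≤ (c₂ * (Complex.normSq (ι (x:K)) * NJ q)) * Complex.normSq v := by
            apply mul_le_mul_of_nonneg_right e2 hnv
end

section
/- Let K be an imaginary quadratic field, a and q nonzero ideals of O_K with a + q = O_K, and α ∈ O_K with αO_K + q = O_K. If t < 4·√(N(q))·N(a), then ∑_{ρ mod q, ρ coprime to q} #{z ∈ a : z ≡ αρ² (mod q), |z|² ≤ t} = O(2^{ω_K(q)} √(N(q))), where the implied constant depends only on K. -/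
open NumberField
open scoped nonZeroDivisors Classical

/-- Number of distinct prime ideal divisors of an ideal of `𝓞 K`. -/
noncomputable def omegaI {K : Type*} [Field K] [NumberField K] (I : Ideal (𝓞 K)) : ℕ :=
  (UniqueFactorizationMonoid.factors I).toFinset.card

set_option synthInstance.maxHeartbeats 800000
set_option maxHeartbeats 6400000

section Aux

variable {K : Type*} [Field K] [NumberField K]

/-- For an imaginary quadratic field, the square modulus of any complex embedding equals the
field norm. -/
lemma aux_normSq_eq_norm (ι : K →+* ℂ) (hdeg : Module.finrank ℚ K = 2)
    (himag : ∀ v : NumberField.InfinitePlace K, v.IsComplex) (x : K) :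
    ((Algebra.norm ℚ x : ℚ) : ℝ) = Complex.normSq (ι x) := by
  have hcard : Fintype.card (K →+* ℂ) = 2 := by
    rw [NumberField.Embeddings.card K ℂ, hdeg]
  have hconj : NumberField.ComplexEmbedding.conjugate ι ≠ ι := by
    intro h
    have h2 : (NumberField.InfinitePlace.mk ι).IsComplex := himag _
    rw [NumberField.InfinitePlace.isComplex_mk_iff] at h2
    exact h2 (NumberField.ComplexEmbedding.isReal_iff.mpr h)
  have huniv : (Finset.univ : Finset (K →+* ℂ))
      = {ι, NumberField.ComplexEmbedding.conjugate ι} := by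
    symm
    apply Finset.eq_univ_of_card
    rw [Finset.card_insert_of_notMem (by simpa using hconj.symm), Finset.card_singleton, hcard]
  have hprod : algebraMap ℚ ℂ (Algebra.norm ℚ x) = ∏ φ : K →+* ℂ, φ x := by
    rw [Algebra.norm_eq_prod_embeddings]
    exact (Fintype.prod_equiv (RingHom.equivRatAlgHom _ _) (fun φ => φ x) (fun σ => σ x)
      (fun φ => rfl)).symm
  rw [huniv, Finset.prod_pair (fun h => hconj h.symm)] at hprod
  have hc : (NumberField.ComplexEmbedding.conjugate ι) x = (starRingEnd ℂ) (ι x) := rfl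
  rw [hc, Complex.mul_conj] at hprod
  have : ((Algebra.norm ℚ x : ℚ) : ℂ) = ((Complex.normSq (ι x) : ℝ) : ℂ) := by
    rw [← hprod]
    simp [Complex.coe_algebraMap]
  exact_mod_cast this

/-- Elements of a nonzero ideal have `normSq` at least the norm of the ideal. -/
lemma aux_norm_lb (ι : K →+* ℂ) (hdeg : Module.finrank ℚ K = 2)
    (himag : ∀ v : NumberField.InfinitePlace K, v.IsComplex)
    {a : Ideal (𝓞 K)} (ha : a ≠ 0) {z : 𝓞 K} (hz : z ∈ a) (hz0 : z ≠ 0) :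
    (Ideal.absNorm a : ℝ) ≤ Complex.normSq (ι (algebraMap (𝓞 K) K z)) := by
  have hspan0 : Ideal.span {z} ≠ (⊥ : Ideal (𝓞 K)) := by
    simpa [Ideal.span_singleton_eq_bot] using hz0
  have h1 : Ideal.absNorm a ≤ Ideal.absNorm (Ideal.span {z}) := by
    apply Nat.le_of_dvd
    · exact Nat.pos_of_ne_zero (by simpa [Ideal.absNorm_eq_zero_iff] using hspan0)
    · exact Ideal.absNorm_dvd_absNorm_of_le ((Ideal.span_singleton_le_iff_mem _).mpr hz)
  have h2 : ((Algebra.norm ℤ z : ℚ) : ℝ) = Complex.normSq (ι (algebraMap (𝓞 K) K z)) := by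
    rw [Algebra.coe_norm_int, aux_normSq_eq_norm ι hdeg himag]
  have h3 : (Ideal.absNorm (Ideal.span {z}) : ℝ) = Complex.normSq (ι (algebraMap (𝓞 K) K z)) := by
    rw [Ideal.absNorm_span_singleton, ← h2]
    have hnn : (0:ℝ) ≤ ((Algebra.norm ℤ z : ℚ) : ℝ) := by
      rw [h2]; exact Complex.normSq_nonneg _
    push_cast [Nat.cast_natAbs] at hnn ⊢
    rw [abs_eq_self.mpr hnn]
  calc (Ideal.absNorm a : ℝ) ≤ (Ideal.absNorm (Ideal.span {z}) : ℝ) := by exact_mod_cast h1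
  _ = _ := h3

/-- Lattice point count: the number of elements of `a` in a disc of squared radius
`t < 4 √(N q) N a` is at most `64 √(N q)`. -/
lemma aux_count (ι : K →+* ℂ) (hdeg : Module.finrank ℚ K = 2)
    (himag : ∀ v : NumberField.InfinitePlace K, v.IsComplex)
    {a q : Ideal (𝓞 K)} (ha : a ≠ 0) (hq : q ≠ 0) {t : ℝ}
    (ht : t < 4 * Real.sqrt (Ideal.absNorm q : ℝ) * (Ideal.absNorm a : ℝ)) :
    ∃ hfin : {z : 𝓞 K | z ∈ a ∧
        Complex.normSq (ι (algebraMap (𝓞 K) K z)) ≤ t}.Finite,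
      (hfin.toFinset.card : ℝ) ≤ 64 * Real.sqrt (Ideal.absNorm q : ℝ) := by
  set Na : ℝ := (Ideal.absNorm a : ℝ) with hNa
  set Nq : ℝ := (Ideal.absNorm q : ℝ) with hNq
  have hNa1 : 1 ≤ Na := by
    rw [hNa]
    exact_mod_cast Nat.one_le_iff_ne_zero.mpr
      (by simpa [Ideal.absNorm_eq_zero_iff] using ha)
  have hNq1 : 1 ≤ Nq := by
    rw [hNq]
    exact_mod_cast Nat.one_le_iff_ne_zero.mpr
      (by simpa [Ideal.absNorm_eq_zero_iff] using hq)
  set s : ℝ := Real.sqrt (Na / 2) with hsdef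
  have hs : 0 < s := Real.sqrt_pos.mpr (by linarith)
  have hs2 : s ^ 2 = Na / 2 := Real.sq_sqrt (by linarith)
  set f : 𝓞 K → ℤ × ℤ := fun z =>
    (⌊(ι (algebraMap (𝓞 K) K z)).re / s⌋, ⌊(ι (algebraMap (𝓞 K) K z)).im / s⌋) with hfdef
  set Zset : Set (𝓞 K) := {z : 𝓞 K | z ∈ a ∧
      Complex.normSq (ι (algebraMap (𝓞 K) K z)) ≤ t} with hZ
  -- injectivity on Zset
  have hinj : Set.InjOn f Zset := by
    intro z hz z' hz' hf
    by_contra hne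
    have hd : z - z' ∈ a := Submodule.sub_mem a hz.1 hz'.1
    have hd0 : z - z' ≠ 0 := sub_ne_zero.mpr hne
    have hge : Na ≤ Complex.normSq (ι (algebraMap (𝓞 K) K (z - z'))) :=
      aux_norm_lb ι hdeg himag ha hd hd0
    have hmap : ι (algebraMap (𝓞 K) K (z - z'))
        = ι (algebraMap (𝓞 K) K z) - ι (algebraMap (𝓞 K) K z') := by
      rw [map_sub, map_sub]
    have h1 : |(ι (algebraMap (𝓞 K) K z)).re / s - (ι (algebraMap (𝓞 K) K z')).re / s| < 1 :=
      Int.abs_sub_lt_one_of_floor_eq_floor (congrArg Prod.fst hf)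
    have h2 : |(ι (algebraMap (𝓞 K) K z)).im / s - (ι (algebraMap (𝓞 K) K z')).im / s| < 1 :=
      Int.abs_sub_lt_one_of_floor_eq_floor (congrArg Prod.snd hf)
    rw [div_sub_div_same, abs_div, abs_of_pos hs, div_lt_one hs] at h1 h2
    rw [hmap, Complex.normSq_apply] at hge
    simp only [Complex.sub_re, Complex.sub_im] at hge
    have e1 := abs_lt.mp h1
    have e2 := abs_lt.mp h2
    nlinarith [hs2, e1.1, e1.2, e2.1, e2.2, hge]
  set M : ℤ := ⌊Real.sqrt t / s⌋ with hM
  have hM0 : 0 ≤ M := Int.floor_nonneg.mpr (by positivity)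
  set box : Finset (ℤ × ℤ) := Finset.Icc (-(M+1)) M ×ˢ Finset.Icc (-(M+1)) M with hbox
  have hmaps : ∀ z ∈ Zset, f z ∈ box := by
    intro z hz
    have hnormle : Complex.normSq (ι (algebraMap (𝓞 K) K z)) ≤ t := hz.2
    rw [Complex.normSq_apply] at hnormle
    have hre : |(ι (algebraMap (𝓞 K) K z)).re| ≤ Real.sqrt t :=
      Real.abs_le_sqrt (by nlinarith [sq_nonneg ((ι (algebraMap (𝓞 K) K z)).im)])
    have him : |(ι (algebraMap (𝓞 K) K z)).im| ≤ Real.sqrt t :=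
      Real.abs_le_sqrt (by nlinarith [sq_nonneg ((ι (algebraMap (𝓞 K) K z)).re)])
    have key : ∀ x : ℝ, |x| ≤ Real.sqrt t → ⌊x / s⌋ ∈ Finset.Icc (-(M+1)) M := by
      intro x hx
      rw [Finset.mem_Icc]
      obtain ⟨hx1, hx2⟩ := abs_le.mp hx
      constructor
      · have hlow : -(Real.sqrt t / s) ≤ x / s := by
          rw [← neg_div]
          gcongr
        calc -(M+1) = -(⌊Real.sqrt t / s⌋ + 1) := by rw [hM]
        _ ≤ -⌈Real.sqrt t / s⌉ := by
            have := Int.ceil_le_floor_add_one (Real.sqrt t / s)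
            omega
        _ = ⌊-(Real.sqrt t / s)⌋ := by rw [Int.floor_neg]
        _ ≤ ⌊x / s⌋ := Int.floor_le_floor hlow
      · exact Int.floor_le_floor (by gcongr)
    rw [hbox, Finset.mem_product]
    exact ⟨key _ hre, key _ him⟩
  have hZfin : Zset.Finite := by
    apply Set.Finite.of_finite_image _ hinj
    exact box.finite_toSet.subset (by rintro _ ⟨z, hz, rfl⟩; exact hmaps z hz)
  refine ⟨hZfin, ?_⟩
  have hcardle : hZfin.toFinset.card ≤ box.card := by
    apply Finset.card_le_card_of_injOn f
    · intro z hz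
      exact hmaps z (hZfin.mem_toFinset.mp hz)
    · intro z hz z' hz' h
      exact hinj (by simpa using hZfin.mem_toFinset.mp hz)
        (by simpa using hZfin.mem_toFinset.mp hz') h
  have hboxcard : (box.card : ℝ) = (2 * (M:ℝ) + 2) ^ 2 := by
    rw [hbox, Finset.card_product, Int.card_Icc]
    have hMM : M + 1 - -(M+1) = 2*M+2 := by ring
    rw [hMM]
    have h2 : (((2 * M + 2).toNat : ℕ) : ℝ) = 2 * (M:ℝ) + 2 := by
      rw [← Int.cast_natCast, Int.toNat_of_nonneg (by omega)]
      push_cast; ring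
    rw [Nat.cast_mul, h2]
    ring
  -- now the numeric bound
  set X : ℝ := Real.sqrt (Real.sqrt Nq) with hX
  have hX1 : 1 ≤ X := by
    rw [hX]
    rw [show (1:ℝ) = Real.sqrt (Real.sqrt 1) by simp]
    exact Real.sqrt_le_sqrt (Real.sqrt_le_sqrt hNq1)
  have hX2 : X ^ 2 = Real.sqrt Nq := Real.sq_sqrt (Real.sqrt_nonneg _)
  have hMle : (M : ℝ) ≤ Real.sqrt t / s := Int.floor_le _
  have hsqrt_t : Real.sqrt t ≤ 2 * X * Real.sqrt Na := by
    have h1 : Real.sqrt t ≤ Real.sqrt (4 * Real.sqrt Nq * Na) := Real.sqrt_le_sqrt ht.le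
    have h2 : Real.sqrt (4 * Real.sqrt Nq * Na)
        = 2 * X * Real.sqrt Na := by
      rw [Real.sqrt_mul (by positivity), Real.sqrt_mul (by norm_num)]
      rw [show Real.sqrt 4 = 2 by
        rw [show (4:ℝ) = 2^2 by norm_num, Real.sqrt_sq (by norm_num)]]
    linarith [h1, h2.le, h2.ge]
  have hs_eq : s = Real.sqrt Na / Real.sqrt 2 := by
    rw [hsdef, Real.sqrt_div (by linarith)]
  have hsqrtNa : 0 < Real.sqrt Na := Real.sqrt_pos.mpr (by linarith)
  have hsqrt2 : Real.sqrt 2 ≤ (3/2 : ℝ) := by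
    rw [show (3/2:ℝ) = Real.sqrt ((3/2)^2) by rw [Real.sqrt_sq (by norm_num)]]
    apply Real.sqrt_le_sqrt; norm_num
  have hdivle : Real.sqrt t / s ≤ 3 * X := by
    rw [hs_eq, div_div_eq_mul_div, div_le_iff₀ hsqrtNa]
    calc Real.sqrt t * Real.sqrt 2 ≤ (2 * X * Real.sqrt Na) * (3/2) := by
          apply mul_le_mul hsqrt_t hsqrt2 (Real.sqrt_nonneg _) (by positivity)
    _ = 3 * X * Real.sqrt Na := by ring
  calc (hZfin.toFinset.card : ℝ) ≤ (box.card : ℝ) := by exact_mod_cast hcardle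
  _ = (2 * (M:ℝ) + 2) ^ 2 := hboxcard
  _ ≤ (8 * X) ^ 2 := by
      apply pow_le_pow_left₀ (by positivity)
      have : (M:ℝ) ≤ 3 * X := hMle.trans hdivle
      nlinarith [hX1]
  _ = 64 * Real.sqrt Nq := by rw [← hX2]; ring

/-- Valuation disjunction: if `p^e ∣ (x(x+2))` then `p^e ∣ (2x)` or `p^e ∣ (2(x+2))`. -/
lemma aux_val_disj {p : Ideal (𝓞 K)} (hp : Prime p) (e : ℕ) {x y : 𝓞 K} (hxy : y = x + 2)
    (h : p ^ e ∣ Ideal.span {x * y}) :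
    p ^ e ∣ Ideal.span {2 * x} ∨ p ^ e ∣ Ideal.span {2 * y} := by
  set v : IsDedekindDomain.HeightOneSpectrum (𝓞 K) :=
    ⟨p, Ideal.isPrime_of_prime hp, by simpa [Ideal.zero_eq_bot] using hp.ne_zero⟩ with hv
  have key : ∀ r : 𝓞 K, v.intValuation r ≤ Multiplicative.ofAdd (-(e:ℤ)) ↔
      p ^ e ∣ Ideal.span {r} := by
    intro r
    rw [IsDedekindDomain.HeightOneSpectrum.intValuation_apply]
    exact v.intValuation_le_pow_iff_dvd r e
  rw [← key] at h
  rw [← key, ← key]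
  by_cases hc : v.intValuation 2 ≤ v.intValuation y
  · left
    calc v.intValuation (2 * x) = v.intValuation 2 * v.intValuation x := Valuation.map_mul _ _ _
    _ ≤ v.intValuation y * v.intValuation x := mul_le_mul_left hc _
    _ = v.intValuation (x * y) := by rw [mul_comm, ← Valuation.map_mul]
    _ ≤ _ := h
  · push_neg at hc
    right
    have hneg : v.intValuation (-2 : 𝓞 K) = v.intValuation 2 := Valuation.map_neg _ _
    have hx' : x = y + (-2 : 𝓞 K) := by rw [hxy]; ring
    have hxval : v.intValuation x = v.intValuation 2 := by
      rw [hx', Valuation.map_add_of_distinct_val, hneg, max_eq_right hc.le]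
      rw [hneg]
      exact hc.ne
    calc v.intValuation (2 * y) = v.intValuation 2 * v.intValuation y := Valuation.map_mul _ _ _
    _ = v.intValuation x * v.intValuation y := by rw [hxval]
    _ = v.intValuation (x * y) := (Valuation.map_mul _ _ _).symm
    _ ≤ _ := h

/-- The two-torsion of `𝓞 K ⧸ q` has at most `4` elements (since `𝓞 K` has `ℤ`-rank 2). -/
lemma aux_two_torsion_card {q : Ideal (𝓞 K)} (hq : q ≠ 0) (hdeg : Module.finrank ℚ K = 2) :
    Nat.card {y : 𝓞 K ⧸ q // 2 * y = 0} ≤ 4 := by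
  haveI : Finite (𝓞 K ⧸ q) :=
    Ideal.finiteQuotientOfFreeOfNeBot q (by simpa [Ideal.zero_eq_bot] using hq)
  haveI : Fintype (𝓞 K ⧸ q) := Fintype.ofFinite _
  set R := 𝓞 K ⧸ q with hR
  set f : R →+ R := AddMonoidHom.mulLeft (2 : R) with hf
  have h0 : Nat.card {y : R // 2 * y = 0} = Nat.card f.ker := by
    apply Nat.card_congr
    apply Equiv.subtypeEquivRight
    intro y
    simp [hf, AddMonoidHom.mem_ker]
  have h1 : f.ker.index * Nat.card f.ker = Nat.card R := AddSubgroup.index_mul_card _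
  have h2 : f.ker.index = Nat.card f.range := AddSubgroup.index_ker f
  have h3 : f.range.index * Nat.card f.range = Nat.card R := AddSubgroup.index_mul_card _
  have hpos : 0 < Nat.card f.range := Nat.card_pos
  have h4 : Nat.card f.ker = f.range.index := by
    have e1 : Nat.card f.range * Nat.card f.ker = Nat.card f.range * f.range.index := by
      calc Nat.card f.range * Nat.card f.ker = f.ker.index * Nat.card f.ker := by rw [h2]
      _ = Nat.card R := h1
      _ = f.range.index * Nat.card f.range := h3.symm
      _ = Nat.card f.range * f.range.index := mul_comm _ _
    exact Nat.eq_of_mul_eq_mul_left hpos e1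
  have h5 : f.range = (Ideal.span {(2:R)}).toAddSubgroup := by
    ext y
    simp only [AddMonoidHom.mem_range, Submodule.mem_toAddSubgroup,
      Ideal.mem_span_singleton']
    constructor
    · rintro ⟨x, rfl⟩; exact ⟨x, by simp [hf, mul_comm]⟩
    · rintro ⟨x, rfl⟩; exact ⟨x, by simp [hf, mul_comm]⟩
  have h6 : f.range.index = Nat.card (R ⧸ Ideal.span {(2:R)}) := by
    rw [h5]
    exact Submodule.cardQuot_apply _
  have e2 : (Ideal.span {(2 : 𝓞 K)}).map (Ideal.Quotient.mk q) = Ideal.span {(2:R)} := by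
    rw [Ideal.map_span, Set.image_singleton, map_ofNat]
  have h7 : Nat.card (R ⧸ Ideal.span {(2:R)})
      = Nat.card ((𝓞 K) ⧸ (q ⊔ Ideal.span {(2 : 𝓞 K)})) := by
    rw [← e2]
    exact Nat.card_congr (DoubleQuot.quotQuotEquivQuotSup q (Ideal.span {(2 : 𝓞 K)})).toEquiv
  have h8 : Nat.card ((𝓞 K) ⧸ (q ⊔ Ideal.span {(2 : 𝓞 K)}))
      = Ideal.absNorm (q ⊔ Ideal.span {(2 : 𝓞 K)}) := by
    rw [Ideal.absNorm_apply, Submodule.cardQuot_apply]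
  have h9 : Ideal.absNorm (q ⊔ Ideal.span {(2 : 𝓞 K)}) ∣
      Ideal.absNorm (Ideal.span {(2 : 𝓞 K)}) :=
    Ideal.absNorm_dvd_absNorm_of_le le_sup_right
  have h10 : Ideal.absNorm (Ideal.span {(2 : 𝓞 K)}) = 4 := by
    rw [Ideal.absNorm_span_singleton]
    have hb := Algebra.norm_algebraMap_of_basis (NumberField.RingOfIntegers.basis K) (2:ℤ)
    have hcardb : Fintype.card (Module.Free.ChooseBasisIndex ℤ (𝓞 K)) = 2 := by
      rw [← Module.finrank_eq_card_chooseBasisIndex, NumberField.RingOfIntegers.rank, hdeg]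
    have h2' : (2 : 𝓞 K) = algebraMap ℤ (𝓞 K) 2 := (map_ofNat _ 2).symm
    rw [h2', hb, hcardb]
    norm_num
  rw [h0, h4, h6, h7, h8]
  exact Nat.le_of_dvd (by norm_num) (h10 ▸ h9)

/-- Square roots of unity mod `q` number at most `4·2^ω(q)`. -/
lemma aux_sqrt_one_card (hdeg : Module.finrank ℚ K = 2) {q : Ideal (𝓞 K)} (hq : q ≠ 0) :
    Nat.card {u : (𝓞 K ⧸ q)ˣ // u ^ 2 = 1} ≤ 4 * 2 ^ omegaI q := by
  classical
  haveI : Finite (𝓞 K ⧸ q) :=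
    Ideal.finiteQuotientOfFreeOfNeBot q (by simpa [Ideal.zero_eq_bot] using hq)
  haveI : Fintype (𝓞 K ⧸ q) := Fintype.ofFinite _
  set F := (UniqueFactorizationMonoid.factors q).toFinset with hFdef
  set E : Ideal (𝓞 K) → ℕ := fun p => (UniqueFactorizationMonoid.factors q).count p with hE
  have hprod : ∏ p ∈ F, p ^ E p = q := by
    rw [hFdef, ← Finset.prod_multiset_count]
    exact associated_iff_eq.mp (UniqueFactorizationMonoid.factors_prod hq)
  have hprime : ∀ p ∈ F, Prime p := fun p hp =>
    UniqueFactorizationMonoid.prime_of_factor p (Multiset.mem_toFinset.mp hp)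
  have hqle : ∀ p ∈ F, q ≤ p ^ E p := fun p hp =>
    Ideal.le_of_dvd (hprod ▸ Finset.dvd_prod_of_mem _ hp)
  -- the key local disjunction
  have hdisj : ∀ u : (𝓞 K ⧸ q)ˣ, u ^ 2 = 1 → ∀ p ∈ F,
      (2 * ((u : 𝓞 K ⧸ q) - 1) ∈ (p ^ E p).map (Ideal.Quotient.mk q)) ∨
      (2 * ((u : 𝓞 K ⧸ q) + 1) ∈ (p ^ E p).map (Ideal.Quotient.mk q)) := by
    intro u hu p hp
    obtain ⟨x, hx⟩ := Ideal.Quotient.mk_surjective (u : 𝓞 K ⧸ q)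
    have hu2 : ((u : 𝓞 K ⧸ q)) ^ 2 = 1 := by
      rw [← Units.val_pow_eq_pow_val, hu, Units.val_one]
    have hx2 : (x - 1) * (x + 1) ∈ q := by
      rw [← Ideal.Quotient.eq_zero_iff_mem]
      have : Ideal.Quotient.mk q ((x - 1) * (x + 1))
          = ((u : 𝓞 K ⧸ q) - 1) * ((u : 𝓞 K ⧸ q) + 1) := by
        rw [map_mul, map_sub, map_add, map_one, hx]
      rw [this]
      have : ((u : 𝓞 K ⧸ q) - 1) * ((u : 𝓞 K ⧸ q) + 1) = (u : 𝓞 K ⧸ q)^2 - 1 := by ring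
      rw [this, hu2, sub_self]
    have hdvd : p ^ E p ∣ Ideal.span {(x - 1) * (x + 1)} :=
      dvd_trans (hprod ▸ Finset.dvd_prod_of_mem _ hp) (Ideal.dvd_span_singleton.mpr hx2)
    have hy : x + 1 = (x - 1) + 2 := by ring
    rcases aux_val_disj (hprime p hp) (E p) hy hdvd with h | h
    · left
      have hmem : (2 * (x - 1)) ∈ p ^ E p := Ideal.dvd_span_singleton.mp h
      have hh := Ideal.mem_map_of_mem (Ideal.Quotient.mk q) hmem
      have heq : Ideal.Quotient.mk q (2 * (x - 1)) = 2 * ((u : 𝓞 K ⧸ q) - 1) := by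
        rw [map_mul, map_sub, map_one, hx, map_ofNat]
      rwa [heq] at hh
    · right
      have hmem : (2 * (x + 1)) ∈ p ^ E p := Ideal.dvd_span_singleton.mp h
      have hh := Ideal.mem_map_of_mem (Ideal.Quotient.mk q) hmem
      have heq : Ideal.Quotient.mk q (2 * (x + 1)) = 2 * ((u : 𝓞 K ⧸ q) + 1) := by
        rw [map_mul, map_add, map_one, hx, map_ofNat]
      rwa [heq] at hh
  set Phi : (𝓞 K ⧸ q)ˣ → (↥F → Prop) := fun u => fun p =>
      2 * ((u : 𝓞 K ⧸ q) - 1) ∈ ((p : Ideal (𝓞 K)) ^ E (p : Ideal (𝓞 K))).map (Ideal.Quotient.mk q)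
    with hPhi
  -- elements with the same Phi differ by two-torsion
  have hker : ∀ u w : (𝓞 K ⧸ q)ˣ, u ^ 2 = 1 → w ^ 2 = 1 → Phi u = Phi w →
      2 * ((u : 𝓞 K ⧸ q) - (w : 𝓞 K ⧸ q)) = 0 := by
    intro u w hu hw hPhieq
    have hmem : ∀ p ∈ F, 2 * ((u : 𝓞 K ⧸ q) - (w : 𝓞 K ⧸ q)) ∈ (p ^ E p).map (Ideal.Quotient.mk q) := by
      intro p hp
      have hPp : Phi u ⟨p, hp⟩ = Phi w ⟨p, hp⟩ := congrFun hPhieq _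
      by_cases hcase : Phi u ⟨p, hp⟩
      · have h1 : 2 * ((u : 𝓞 K ⧸ q) - 1) ∈ (p ^ E p).map (Ideal.Quotient.mk q) := hcase
        have h2' : Phi w ⟨p, hp⟩ := by rw [← hPp]; exact hcase
        have h2 : 2 * ((w : 𝓞 K ⧸ q) - 1) ∈ (p ^ E p).map (Ideal.Quotient.mk q) := h2'
        have := Ideal.sub_mem _ h1 h2
        have heq : 2 * ((u : 𝓞 K ⧸ q) - 1) - 2 * ((w : 𝓞 K ⧸ q) - 1) = 2 * ((u : 𝓞 K ⧸ q) - (w : 𝓞 K ⧸ q)) := by ring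
        rwa [heq] at this
      · have h1 : 2 * ((u : 𝓞 K ⧸ q) + 1) ∈ (p ^ E p).map (Ideal.Quotient.mk q) :=
          (hdisj u hu p hp).resolve_left hcase
        have hcase' : ¬ Phi w ⟨p, hp⟩ := by rw [← hPp]; exact hcase
        have h2 : 2 * ((w : 𝓞 K ⧸ q) + 1) ∈ (p ^ E p).map (Ideal.Quotient.mk q) :=
          (hdisj w hw p hp).resolve_left hcase'
        have := Ideal.sub_mem _ h1 h2
        have heq : 2 * ((u : 𝓞 K ⧸ q) + 1) - 2 * ((w : 𝓞 K ⧸ q) + 1) = 2 * ((u : 𝓞 K ⧸ q) - (w : 𝓞 K ⧸ q)) := by ring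
        rwa [heq] at this
    obtain ⟨d, hd⟩ := Ideal.Quotient.mk_surjective ((u : 𝓞 K ⧸ q) - (w : 𝓞 K ⧸ q))
    have hdm : ∀ p ∈ F, (2 * d) ∈ p ^ E p := by
      intro p hp
      have h1 := hmem p hp
      have h2 : Ideal.Quotient.mk q (2 * d) = 2 * ((u : 𝓞 K ⧸ q) - (w : 𝓞 K ⧸ q)) := by
        rw [map_mul, hd, map_ofNat]
      rw [← h2] at h1
      exact (Ideal.mem_quotient_iff_mem (hqle p hp)).mp h1
    have hqdvd : q ∣ Ideal.span {2 * d} := by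
      rw [← hprod]
      apply Finset.prod_dvd_of_coprime
      · intro p hp p' hp' hne
        have hpF : p ∈ F := Finset.mem_coe.mp hp
        have hpF' : p' ∈ F := Finset.mem_coe.mp hp'
        have hm : p.IsMaximal :=
          Ideal.IsPrime.isMaximal (Ideal.isPrime_of_prime (hprime p hpF))
            (by simpa [Ideal.zero_eq_bot] using (hprime p hpF).ne_zero)
        have hm' : p'.IsMaximal :=
          Ideal.IsPrime.isMaximal (Ideal.isPrime_of_prime (hprime p' hpF'))
            (by simpa [Ideal.zero_eq_bot] using (hprime p' hpF').ne_zero)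
        have hcop : IsCoprime p p' :=
          Ideal.isCoprime_iff_sup_eq.mpr (Ideal.IsMaximal.coprime_of_ne hm hm' hne)
        show IsCoprime (p ^ E p) (p' ^ E p')
        exact hcop.pow
      · intro p hp
        exact Ideal.dvd_span_singleton.mpr (hdm p hp)
    have h0 : (2 * d : 𝓞 K) ∈ q := Ideal.le_of_dvd hqdvd (Ideal.mem_span_singleton_self _)
    calc 2 * ((u : 𝓞 K ⧸ q) - (w : 𝓞 K ⧸ q)) = Ideal.Quotient.mk q (2 * d) := by rw [map_mul, hd, map_ofNat]
    _ = 0 := Ideal.Quotient.eq_zero_iff_mem.mpr h0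
  -- counting
  have hcount : Nat.card {u : (𝓞 K ⧸ q)ˣ // u ^ 2 = 1}
      = (Finset.univ.filter (fun u : (𝓞 K ⧸ q)ˣ => u ^ 2 = 1)).card := by
    rw [Nat.card_eq_fintype_card, Fintype.card_subtype]
  rw [hcount]
  set S := Finset.univ.filter (fun u : (𝓞 K ⧸ q)ˣ => u ^ 2 = 1) with hS
  set A := Finset.univ.filter (fun y : 𝓞 K ⧸ q => 2 * y = 0) with hA
  have hAcard : A.card ≤ 4 := by
    have : A.card = Nat.card {y : 𝓞 K ⧸ q // 2 * y = 0} := by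
      rw [Nat.card_eq_fintype_card, Fintype.card_subtype]
    rw [this]
    exact aux_two_torsion_card hq hdeg
  have hfibers : ∀ c ∈ S.image Phi, (S.filter (fun u => Phi u = c)).card ≤ A.card := by
    intro c hc
    obtain ⟨u₀, hu₀S, hu₀⟩ := Finset.mem_image.mp hc
    refine Finset.card_le_card_of_injOn (fun u => (u : 𝓞 K ⧸ q) - (u₀ : 𝓞 K ⧸ q)) ?_ ?_
    · intro u hu
      obtain ⟨huS, huPhi⟩ := Finset.mem_filter.mp hu
      rw [hA, Finset.mem_coe, Finset.mem_filter]
      refine ⟨Finset.mem_univ _, ?_⟩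
      exact hker u u₀ (Finset.mem_filter.mp huS).2 (Finset.mem_filter.mp hu₀S).2
        (huPhi.trans hu₀.symm)
    · intro u hu u' hu' heq
      have h1 : (u : 𝓞 K ⧸ q) - (u₀ : 𝓞 K ⧸ q) = (u' : 𝓞 K ⧸ q) - (u₀ : 𝓞 K ⧸ q) := heq
      have h2 : (u : 𝓞 K ⧸ q) = (u' : 𝓞 K ⧸ q) := by
        have h3 := congrArg (· + (u₀ : 𝓞 K ⧸ q)) h1
        simpa using h3
      exact Units.ext h2
  have hmain : S.card ≤ A.card * (S.image Phi).card :=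
    Finset.card_le_mul_card_image S A.card hfibers
  have himage : (S.image Phi).card ≤ 2 ^ F.card := by
    calc (S.image Phi).card ≤ Fintype.card (↥F → Prop) := Finset.card_le_univ _
    _ = Fintype.card Prop ^ Fintype.card ↥F := Fintype.card_fun
    _ = 2 ^ F.card := by rw [Fintype.card_prop, Fintype.card_coe]
  have : omegaI q = F.card := rfl
  rw [this]
  calc S.card ≤ A.card * (S.image Phi).card := hmain
  _ ≤ 4 * 2 ^ F.card := Nat.mul_le_mul hAcard himage



/-- The number of units `ρ` with `α ρ² = c` is at most `4·2^ω(q)`. -/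
lemma aux_fiber_card (hdeg : Module.finrank ℚ K = 2) {q : Ideal (𝓞 K)} (hq : q ≠ 0)
    {α : 𝓞 K} (hα : Ideal.span {α} ⊔ q = ⊤) (c : 𝓞 K ⧸ q) :
    Nat.card {ρ : (𝓞 K ⧸ q)ˣ //
        Ideal.Quotient.mk q α * (ρ : 𝓞 K ⧸ q) ^ 2 = c} ≤ 4 * 2 ^ omegaI q := by
  classical
  haveI : Finite (𝓞 K ⧸ q) :=
    Ideal.finiteQuotientOfFreeOfNeBot q (by simpa [Ideal.zero_eq_bot] using hq)
  haveI : Fintype (𝓞 K ⧸ q) := Fintype.ofFinite _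
  have hUα : IsUnit (Ideal.Quotient.mk q α) := by
    have h1 : (1 : 𝓞 K) ∈ Ideal.span {α} ⊔ q := hα ▸ Submodule.mem_top
    obtain ⟨y, hy, z, hz, hyz⟩ := Submodule.mem_sup.mp h1
    obtain ⟨r, hr⟩ := Ideal.mem_span_singleton'.mp hy
    refine isUnit_iff_exists_inv.mpr ⟨Ideal.Quotient.mk q r, ?_⟩
    have h2 : Ideal.Quotient.mk q (y + z) = 1 := by rw [hyz]; exact map_one _
    rw [map_add, Ideal.Quotient.eq_zero_iff_mem.mpr hz, add_zero] at h2
    rw [← hr, map_mul, mul_comm] at h2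
    exact h2
  have hcount : Nat.card {ρ : (𝓞 K ⧸ q)ˣ // Ideal.Quotient.mk q α * (ρ : 𝓞 K ⧸ q) ^ 2 = c}
      = (Finset.univ.filter
          (fun ρ : (𝓞 K ⧸ q)ˣ => Ideal.Quotient.mk q α * (ρ : 𝓞 K ⧸ q) ^ 2 = c)).card := by
    rw [Nat.card_eq_fintype_card, Fintype.card_subtype]
  rw [hcount]
  set T := Finset.univ.filter
    (fun ρ : (𝓞 K ⧸ q)ˣ => Ideal.Quotient.mk q α * (ρ : 𝓞 K ⧸ q) ^ 2 = c) with hT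
  rcases Finset.eq_empty_or_nonempty T with hTe | ⟨ρ₀, hρ₀⟩
  · rw [hTe]; simp
  · have hρ₀c : Ideal.Quotient.mk q α * (ρ₀ : 𝓞 K ⧸ q) ^ 2 = c := (Finset.mem_filter.mp hρ₀).2
    have hstep : T.card ≤ (Finset.univ.filter (fun u : (𝓞 K ⧸ q)ˣ => u ^ 2 = 1)).card := by
      apply Finset.card_le_card_of_injOn (fun ρ => ρ * ρ₀⁻¹)
      · intro ρ hρ
        have hρc : Ideal.Quotient.mk q α * (ρ : 𝓞 K ⧸ q) ^ 2 = c := (Finset.mem_filter.mp hρ).2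
        rw [Finset.mem_coe, Finset.mem_filter]
        refine ⟨Finset.mem_univ _, ?_⟩
        have hsq : (ρ : 𝓞 K ⧸ q) ^ 2 = (ρ₀ : 𝓞 K ⧸ q) ^ 2 :=
          hUα.mul_left_cancel (hρc.trans hρ₀c.symm)
        have hsqU : ρ ^ 2 = ρ₀ ^ 2 := by
          apply Units.ext
          rw [Units.val_pow_eq_pow_val, Units.val_pow_eq_pow_val]
          exact hsq
        rw [mul_pow, hsqU, inv_pow, mul_inv_cancel]
      · intro ρ _ ρ' _ heq
        exact mul_right_cancel heq
    calc T.card ≤ _ := hstep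
    _ = Nat.card {u : (𝓞 K ⧸ q)ˣ // u ^ 2 = 1} := by
        rw [Nat.card_eq_fintype_card, Fintype.card_subtype]
    _ ≤ 4 * 2 ^ omegaI q := aux_sqrt_one_card hdeg hq

end Aux

/-- small-`t` case of Theorem 1.2: if `t < 4 √(N q) N a` then
`∑_{ρ mod q, (ρ,q)=1} #{z ∈ a : z ≡ αρ² mod q, |z|² ≤ t} = O(2^{ω(q)} √(N q))`. -/
theorem stmt_5 {K : Type*} [Field K] [NumberField K] (ι : K →+* ℂ)
    (hdeg : Module.finrank ℚ K = 2)
    (himag : ∀ v : NumberField.InfinitePlace K, v.IsComplex) :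
    ∃ C : ℝ, 0 < C ∧ ∀ (a q : Ideal (𝓞 K)), a ≠ 0 → q ≠ 0 → ∀ α : 𝓞 K,
      a ⊔ q = ⊤ → Ideal.span {α} ⊔ q = ⊤ → ∀ t : ℝ,
      t < 4 * Real.sqrt (Ideal.absNorm q : ℝ) * (Ideal.absNorm a : ℝ) →
      (∑ᶠ ρ : (𝓞 K ⧸ q)ˣ,
          (Nat.card {z : 𝓞 K // z ∈ a ∧
              Ideal.Quotient.mk q z = Ideal.Quotient.mk q α * (ρ : 𝓞 K ⧸ q) ^ 2 ∧
              Complex.normSq (ι (algebraMap (𝓞 K) K z)) ≤ t} : ℝ))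
        ≤ C * 2 ^ omegaI q * Real.sqrt (Ideal.absNorm q : ℝ) := by
  classical
  refine ⟨256, by norm_num, ?_⟩
  intro a q ha hq α hcop hαcop t ht
  haveI : Finite (𝓞 K ⧸ q) :=
    Ideal.finiteQuotientOfFreeOfNeBot q (by simpa [Ideal.zero_eq_bot] using hq)
  haveI : Fintype (𝓞 K ⧸ q) := Fintype.ofFinite _
  obtain ⟨hZfin, hZcard⟩ := aux_count ι hdeg himag ha hq ht
  set Zfin := hZfin.toFinset with hZfindef
  -- rewrite each Nat.card as a Finset filter card
  have hcard_eq : ∀ ρ : (𝓞 K ⧸ q)ˣ,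
      (Nat.card {z : 𝓞 K // z ∈ a ∧
          Ideal.Quotient.mk q z = Ideal.Quotient.mk q α * (ρ : 𝓞 K ⧸ q) ^ 2 ∧
          Complex.normSq (ι (algebraMap (𝓞 K) K z)) ≤ t})
      = (Zfin.filter (fun z => Ideal.Quotient.mk q z
          = Ideal.Quotient.mk q α * (ρ : 𝓞 K ⧸ q) ^ 2)).card := by
    intro ρ
    rw [← Nat.card_eq_finsetCard]
    apply Nat.card_congr
    apply Equiv.subtypeEquivRight
    intro z
    simp only [Finset.mem_filter, hZfindef, Set.Finite.mem_toFinset, Set.mem_setOf_eq]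
    tauto
  have hsum_eq : (∑ᶠ ρ : (𝓞 K ⧸ q)ˣ,
      (Nat.card {z : 𝓞 K // z ∈ a ∧
          Ideal.Quotient.mk q z = Ideal.Quotient.mk q α * (ρ : 𝓞 K ⧸ q) ^ 2 ∧
          Complex.normSq (ι (algebraMap (𝓞 K) K z)) ≤ t} : ℝ))
      = ((∑ ρ : (𝓞 K ⧸ q)ˣ, (Zfin.filter (fun z => Ideal.Quotient.mk q z
          = Ideal.Quotient.mk q α * (ρ : 𝓞 K ⧸ q) ^ 2)).card : ℕ) : ℝ) := by
    rw [finsum_eq_sum_of_fintype]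
    push_cast
    apply Finset.sum_congr rfl
    intro ρ _
    rw [hcard_eq ρ]
  rw [hsum_eq]
  -- double counting
  have hswap : (∑ ρ : (𝓞 K ⧸ q)ˣ, (Zfin.filter (fun z => Ideal.Quotient.mk q z
      = Ideal.Quotient.mk q α * (ρ : 𝓞 K ⧸ q) ^ 2)).card)
      = ∑ z ∈ Zfin, (Finset.univ.filter (fun ρ : (𝓞 K ⧸ q)ˣ =>
          Ideal.Quotient.mk q α * (ρ : 𝓞 K ⧸ q) ^ 2 = Ideal.Quotient.mk q z)).card := by
    simp only [Finset.card_filter]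
    rw [Finset.sum_comm]
    apply Finset.sum_congr rfl
    intro z _
    apply Finset.sum_congr rfl
    intro ρ _
    congr 1
    · simp [eq_comm]
  have hbound : ∀ z ∈ Zfin, (Finset.univ.filter (fun ρ : (𝓞 K ⧸ q)ˣ =>
      Ideal.Quotient.mk q α * (ρ : 𝓞 K ⧸ q) ^ 2 = Ideal.Quotient.mk q z)).card
      ≤ 4 * 2 ^ omegaI q := by
    intro z _
    have := aux_fiber_card hdeg hq hαcop (Ideal.Quotient.mk q z)
    rwa [Nat.card_eq_fintype_card, Fintype.card_subtype] at this
  have htotal : (∑ ρ : (𝓞 K ⧸ q)ˣ, (Zfin.filter (fun z => Ideal.Quotient.mk q z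
      = Ideal.Quotient.mk q α * (ρ : 𝓞 K ⧸ q) ^ 2)).card)
      ≤ Zfin.card * (4 * 2 ^ omegaI q) := by
    rw [hswap]
    calc ∑ z ∈ Zfin, (Finset.univ.filter (fun ρ : (𝓞 K ⧸ q)ˣ =>
          Ideal.Quotient.mk q α * (ρ : 𝓞 K ⧸ q) ^ 2 = Ideal.Quotient.mk q z)).card
        ≤ ∑ _z ∈ Zfin, (4 * 2 ^ omegaI q) := Finset.sum_le_sum hbound
    _ = Zfin.card * (4 * 2 ^ omegaI q) := by rw [Finset.sum_const, smul_eq_mul]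
  calc ((∑ ρ : (𝓞 K ⧸ q)ˣ, (Zfin.filter (fun z => Ideal.Quotient.mk q z
      = Ideal.Quotient.mk q α * (ρ : 𝓞 K ⧸ q) ^ 2)).card : ℕ) : ℝ)
      ≤ ((Zfin.card * (4 * 2 ^ omegaI q) : ℕ) : ℝ) := by exact_mod_cast htotal
  _ = (Zfin.card : ℝ) * (4 * 2 ^ omegaI q) := by push_cast; ring
  _ ≤ (64 * Real.sqrt (Ideal.absNorm q : ℝ)) * (4 * 2 ^ omegaI q) := by
      apply mul_le_mul_of_nonneg_right hZcard (by positivity)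
  _ = 256 * 2 ^ omegaI q * Real.sqrt (Ideal.absNorm q : ℝ) := by ring
end

section
/- Let B ≥ 3. The integral J(B) := ∫ dη₁dη₃dη₄dη₅dη₆dη₇ / |η₁η₃η₄η₅η₆η₇| over all (η₁,η₃,η₄,η₅,η₆,η₇) ∈ ℂ⁶ with |η₁|,|η₃|,|η₄|,|η₅|,|η₆|,|η₇| ≥ 1 and |η₁²η₃⁴η₄⁴η₅⁵η₆⁶η₇³| ≤ B satisfies J(B) = 3π⁶·α·(log B)⁶ with α = 1/6220800, where |z| = z·conj(z) and the integration is with respect to Lebesgue measure on ℂ ≅ ℝ² in each variable. -/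
open MeasureTheory
open scoped Real Classical

open Set
open scoped ENNReal

namespace Stmt16Aux

lemma normSq_Iic_vol (b : ℝ) :
    volume ((fun z : ℂ => Complex.normSq z) ⁻¹' (Iic b)) = NNReal.pi * ENNReal.ofReal b := by
  rcases le_or_gt 0 b with hb | hb
  · have h : (fun z : ℂ => Complex.normSq z) ⁻¹' (Iic b) = Metric.closedBall 0 (Real.sqrt b) := by
      ext z
      simp only [mem_preimage, mem_Iic, Metric.mem_closedBall, Complex.dist_eq, sub_zero]
      rw [show ‖z‖ = Real.sqrt (Complex.normSq z) from Complex.norm_def z,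
        Real.sqrt_le_sqrt_iff hb]
    rw [h, Complex.volume_closedBall, ← ENNReal.ofReal_pow (Real.sqrt_nonneg b),
      Real.sq_sqrt hb, mul_comm]
  · have h : (fun z : ℂ => Complex.normSq z) ⁻¹' (Iic b) = ∅ := by
      ext z
      simp only [mem_preimage, mem_Iic, mem_empty_iff_false, iff_false, not_le]
      exact hb.trans_le (Complex.normSq_nonneg z)
    rw [h]
    simp [ENNReal.ofReal_eq_zero.2 hb.le]

lemma map_normSq :
    Measure.map (fun z : ℂ => Complex.normSq z) volume
      = (NNReal.pi : ℝ≥0∞) • volume.restrict (Ici (0:ℝ)) := by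
  have hm : Measurable fun z : ℂ => Complex.normSq z := Complex.continuous_normSq.measurable
  refine Measure.ext_of_Ioc' _ _ (fun a b hab => ?_) (fun a b hab => ?_)
  · rw [Measure.map_apply hm measurableSet_Ioc]
    have hsub : (fun z : ℂ => Complex.normSq z) ⁻¹' (Ioc a b)
        ⊆ (fun z : ℂ => Complex.normSq z) ⁻¹' (Iic b) := fun z hz => hz.2
    refine ne_of_lt (lt_of_le_of_lt (measure_mono hsub) ?_)
    rw [normSq_Iic_vol]
    exact ENNReal.mul_lt_top ENNReal.coe_lt_top ENNReal.ofReal_lt_top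
  · rw [Measure.map_apply hm measurableSet_Ioc, Measure.smul_apply, smul_eq_mul,
      Measure.restrict_apply measurableSet_Ioc]
    have hsplit : (fun z : ℂ => Complex.normSq z) ⁻¹' (Ioc a b)
        = ((fun z : ℂ => Complex.normSq z) ⁻¹' (Iic b)) \
          ((fun z : ℂ => Complex.normSq z) ⁻¹' (Iic a)) := by
      rw [← preimage_diff, Iic_sdiff_Iic]
    rw [hsplit, measure_diff (preimage_mono (Iic_subset_Iic.2 hab.le))
        (hm measurableSet_Iic).nullMeasurableSet
        (by rw [normSq_Iic_vol]; exact ENNReal.mul_ne_top ENNReal.coe_ne_top ENNReal.ofReal_ne_top),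
      normSq_Iic_vol, normSq_Iic_vol]
    rcases le_or_gt 0 a with ha | ha
    · have hIoc : Ioc a b ∩ Ici (0:ℝ) = Ioc a b :=
        inter_eq_left.2 (fun x hx => ha.trans hx.1.le)
      rw [hIoc, Real.volume_Ioc]
      refine ENNReal.sub_eq_of_eq_add (ENNReal.mul_ne_top ENNReal.coe_ne_top
        ENNReal.ofReal_ne_top) ?_
      rw [← mul_add, ← ENNReal.ofReal_add (sub_nonneg.2 hab.le) ha, sub_add_cancel]
    · rw [ENNReal.ofReal_eq_zero.2 ha.le, mul_zero, tsub_zero]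
      rcases le_or_gt 0 b with hb | hb
      · have hIoc : Ioc a b ∩ Ici (0:ℝ) = Icc 0 b := by
          ext x
          simp only [mem_inter_iff, mem_Ioc, mem_Ici, mem_Icc]
          constructor
          · rintro ⟨⟨_, h2⟩, h3⟩; exact ⟨h3, h2⟩
          · rintro ⟨h1, h2⟩; exact ⟨⟨ha.trans_le h1, h2⟩, h1⟩
        rw [hIoc, Real.volume_Icc, sub_zero]
      · have hIoc : Ioc a b ∩ Ici (0:ℝ) = ∅ := by
          ext x
          simp only [mem_inter_iff, mem_Ioc, mem_Ici, mem_empty_iff_false, iff_false]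
          rintro ⟨⟨_, h2⟩, h3⟩
          exact absurd (h3.trans h2) (not_le.2 hb)
        rw [hIoc, ENNReal.ofReal_eq_zero.2 hb.le]
        simp



lemma lintegral_normSq_comp (h : ℝ → ℝ≥0∞) (hh : Measurable h) :
    ∫⁻ z : ℂ, h (Complex.normSq z) = NNReal.pi * ∫⁻ x in Ici (0:ℝ), h x := by
  rw [← lintegral_map hh Complex.continuous_normSq.measurable, map_normSq,
    lintegral_smul_measure, smul_eq_mul]

lemma exp_image_Ioi : Real.exp '' Ioi (0:ℝ) = Ioi 1 := by
  ext x
  constructor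
  · rintro ⟨t, ht, rfl⟩
    exact Real.one_lt_exp_iff.mpr ht
  · intro hx
    exact ⟨Real.log x, Real.log_pos hx, Real.exp_log (lt_trans one_pos hx)⟩

lemma lemmaA (g : ℝ → ℝ≥0∞) (hg : Measurable g) :
    ∫⁻ z : ℂ, Set.indicator (Ici (1:ℝ))
        (fun x => (ENNReal.ofReal x)⁻¹ * g (Real.log x)) (Complex.normSq z)
      = NNReal.pi * ∫⁻ t in Ioi (0:ℝ), g t := by
  have hmeas : Measurable fun x : ℝ => (ENNReal.ofReal x)⁻¹ * g (Real.log x) :=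
    (ENNReal.measurable_ofReal.inv).mul (hg.comp Real.measurable_log)
  rw [lintegral_normSq_comp _ (hmeas.indicator measurableSet_Ici)]
  congr 1
  rw [lintegral_indicator measurableSet_Ici, Measure.restrict_restrict measurableSet_Ici]
  have h1 : Ici (1:ℝ) ∩ Ici 0 = Ici 1 := inter_eq_left.2 (Ici_subset_Ici.2 zero_le_one)
  rw [h1]
  have h2 : ∫⁻ x in Ici (1:ℝ), (ENNReal.ofReal x)⁻¹ * g (Real.log x)
      = ∫⁻ x in Ioi (1:ℝ), (ENNReal.ofReal x)⁻¹ * g (Real.log x) :=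
    setLIntegral_congr (Ioi_ae_eq_Ici (a := (1:ℝ))).symm
  rw [h2, ← exp_image_Ioi,
    lintegral_image_eq_lintegral_abs_det_fderiv_mul volume measurableSet_Ioi
      (f' := fun t => ContinuousLinearMap.smulRight (1 : ℝ →L[ℝ] ℝ) (Real.exp t))
      (fun x _ => (Real.hasDerivAt_exp x).hasFDerivAt.hasFDerivWithinAt)
      (Real.exp_injective.injOn) _]
  refine setLIntegral_congr_fun measurableSet_Ioi (fun t ht => ?_)
  have hdet : (ContinuousLinearMap.smulRight (1 : ℝ →L[ℝ] ℝ) (Real.exp t)).det = Real.exp t := by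
    exact ContinuousLinearMap.det_toSpanSingleton (Real.exp t)
  rw [hdet, abs_of_pos (Real.exp_pos t), Real.log_exp, ← mul_assoc,
    ENNReal.mul_inv_cancel (by positivity) ENNReal.ofReal_ne_top, one_mul]



def K (n : ℕ) (e : Fin n → ℕ) (L : ℝ) : Set (Fin n → ℂ) :=
  {η | (∀ i, 1 ≤ Complex.normSq (η i)) ∧
    ∑ i, (e i : ℝ) * Real.log (Complex.normSq (η i)) ≤ L}

noncomputable def F (n : ℕ) : (Fin n → ℂ) → ℝ≥0∞ :=
  fun η => ∏ i, (ENNReal.ofReal (Complex.normSq (η i)))⁻¹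

lemma measurableSet_K (n : ℕ) (e : Fin n → ℕ) (L : ℝ) : MeasurableSet (K n e L) := by
  refine MeasurableSet.inter ?_ ?_
  · have : {η : Fin n → ℂ | ∀ i, 1 ≤ Complex.normSq (η i)}
      = ⋂ i, {η : Fin n → ℂ | 1 ≤ Complex.normSq (η i)} := by ext η; simp
    rw [show (fun η : Fin n → ℂ => ∀ i, 1 ≤ Complex.normSq (η i))
      = {η : Fin n → ℂ | ∀ i, 1 ≤ Complex.normSq (η i)} from rfl, this]
    exact MeasurableSet.iInter fun i =>
      measurableSet_le measurable_const
        (Complex.continuous_normSq.measurable.comp (measurable_pi_apply i))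
  · exact measurableSet_le
      (Finset.measurable_sum _ fun i _ =>
        (Real.measurable_log.comp
          (Complex.continuous_normSq.measurable.comp (measurable_pi_apply i))).const_mul _)
      measurable_const

lemma measurable_F (n : ℕ) : Measurable (F n) :=
  Finset.measurable_prod _ fun i _ =>
    ((ENNReal.measurable_ofReal.comp
      (Complex.continuous_normSq.measurable.comp (measurable_pi_apply i))).inv)

lemma K_empty (n : ℕ) (e : Fin n → ℕ) (L : ℝ) (hL : L < 0) : K n e L = ∅ := by
  ext η
  simp only [K, mem_setOf_eq, mem_empty_iff_false, iff_false, not_and]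
  intro h1
  refine not_le.2 (lt_of_lt_of_le hL ?_)
  exact Finset.sum_nonneg fun i _ =>
    mul_nonneg (Nat.cast_nonneg _) (Real.log_nonneg (h1 i))

lemma oned (a L : ℝ) (ha : 0 < a) (hL : 0 ≤ L) (n : ℕ) :
    ∫⁻ t in Ioc 0 (L/a), ENNReal.ofReal (L - a*t) ^ n
      = ENNReal.ofReal (L^(n+1) / (a * (n+1))) := by
  have hM : 0 ≤ L / a := div_nonneg hL ha.le
  have hcong : ∫⁻ t in Ioc 0 (L/a), ENNReal.ofReal (L - a*t) ^ n
      = ∫⁻ t in Ioc 0 (L/a), ENNReal.ofReal ((L - a*t) ^ n) := by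
    refine setLIntegral_congr_fun measurableSet_Ioc (fun t ht => ?_)
    refine (ENNReal.ofReal_pow ?_ n).symm
    rw [sub_nonneg, mul_comm, ← le_div_iff₀ ha]
    exact ht.2
  rw [hcong, ← ofReal_integral_eq_lintegral_ofReal]
  · congr 1
    rw [← intervalIntegral.integral_of_le hM]
    have hderiv : ∀ t ∈ uIcc (0:ℝ) (L/a),
        HasDerivAt (fun t => -((L - a*t)^(n+1)) / (a*(n+1))) ((L - a*t)^n) t := by
      intro t _
      have h1 : HasDerivAt (fun t : ℝ => L - a*t) (-a) t := by
        simpa using ((hasDerivAt_id t).const_mul a).const_sub L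
      have h2 := (h1.pow (n+1)).neg.div_const (a*(n+1))
      refine h2.congr_deriv ?_
      rw [Nat.add_sub_cancel]
      push_cast
      field_simp
    rw [intervalIntegral.integral_eq_sub_of_hasDerivAt hderiv
      (((continuous_const.sub (continuous_const.mul continuous_id)).pow n).intervalIntegrable _ _)]
    have hz : L - a * (L/a) = 0 := by field_simp; ring
    rw [hz]
    simp only [zero_pow (Nat.succ_ne_zero n), neg_zero, zero_div, mul_zero, sub_zero]
    rw [zero_sub, neg_div, neg_neg]
  · refine (Continuous.integrableOn_Ioc ?_)
    exact (continuous_const.sub (continuous_const.mul continuous_id)).pow n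
  · refine (ae_restrict_iff' measurableSet_Ioc).2 (ae_of_all _ fun t ht => ?_)
    have hat : a * t ≤ L := by
      rw [mul_comm, ← le_div_iff₀ ha]
      exact ht.2
    have : (0:ℝ) ≤ L - a * t := sub_nonneg.2 hat
    positivity




lemma key : ∀ (n : ℕ) (e : Fin n → ℕ), (∀ i, 0 < e i) → ∀ L : ℝ, 0 ≤ L →
    ∫⁻ η in K n e L, F n η
      = (NNReal.pi : ℝ≥0∞) ^ n
        * ENNReal.ofReal (L ^ n / (n.factorial * ∏ i, (e i : ℝ))) := by
  intro n
  induction n with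
  | zero =>
      intro e he L hL
      have hK : K 0 e L = univ := by
        ext η
        simp [K, hL]
      have hF : F 0 = fun _ => 1 := by
        funext η
        simp [F]
      rw [hK, hF, Measure.restrict_univ, lintegral_one]
      have : (volume : Measure (Fin 0 → ℂ)) univ = 1 := by
        rw [volume_pi, Measure.pi_univ]
        simp
      rw [this]
      norm_num
  | succ n ih =>
      intro e he L hL
      have ha : (0:ℝ) < (e 0 : ℝ) := by exact_mod_cast he 0
      set a : ℝ := (e 0 : ℝ) with ha_def
      set e' : Fin n → ℕ := fun j => e ((0 : Fin (n+1)).succAbove j) with he'_def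
      have he' : ∀ j, 0 < e' j := fun j => he _
      set c : ℝ≥0∞ := (NNReal.pi : ℝ≥0∞)^n
        * ENNReal.ofReal (1 / (n.factorial * ∏ j, (e' j : ℝ))) with hc
      have hcne : c ≠ ⊤ := ENNReal.mul_ne_top (ENNReal.pow_ne_top ENNReal.coe_ne_top)
        ENNReal.ofReal_ne_top
      set G : ℝ → ℝ≥0∞ := fun t =>
        Set.indicator {t : ℝ | a * t ≤ L} (fun t => c * ENNReal.ofReal (L - a*t) ^ n) t with hGdef
      have hSmeas : MeasurableSet {t : ℝ | a * t ≤ L} :=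
        measurableSet_le (measurable_id.const_mul a) measurable_const
      have hGmeas : Measurable G := by
        refine Measurable.indicator ?_ hSmeas
        exact (measurable_const.mul
          ((ENNReal.measurable_ofReal.comp
            (measurable_const.sub (measurable_id.const_mul a))).pow_const n))
      have hIH : ∀ t : ℝ, (∫⁻ η' in K n e' (L - a*t), F n η') = G t := by
        intro t
        by_cases h : a * t ≤ L
        · have hL' : (0:ℝ) ≤ L - a*t := sub_nonneg.2 h
          have hGt : G t = c * ENNReal.ofReal (L - a*t) ^ n :=
            Set.indicator_of_mem (show t ∈ {t : ℝ | a * t ≤ L} from h) _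
          rw [ih e' he' _ hL', hGt, hc, mul_assoc]
          congr 1
          rw [← ENNReal.ofReal_pow hL', ← ENNReal.ofReal_mul (by positivity)]
          congr 1
          rw [one_div_mul_eq_div]
        · rw [K_empty n e' _ (by linarith [not_le.1 h]), Measure.restrict_empty,
            lintegral_zero_measure]
          exact (Set.indicator_of_notMem (show t ∉ {t : ℝ | a * t ≤ L} from h) _).symm
      -- peel off the first coordinate
      set E := MeasurableEquiv.piFinSuccAbove (fun _ : Fin (n+1) => ℂ) 0 with hE
      have hmp := measurePreserving_piFinSuccAbove (fun _ : Fin (n+1) => (volume : Measure ℂ)) 0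
      set g : ℂ × (Fin n → ℂ) → ℝ≥0∞ :=
        fun p => Set.indicator (K (n+1) e L) (F (n+1)) ((0 : Fin (n+1)).insertNth p.1 p.2)
        with hgdef
      have hEsymm : ∀ p : ℂ × (Fin n → ℂ), E.symm p = (0 : Fin (n+1)).insertNth p.1 p.2 := by
        intro p
        rfl
      have hgmeas : Measurable g := by
        have : g = fun p => Set.indicator (K (n+1) e L) (F (n+1)) (E.symm p) := by
          funext p
          rw [hEsymm]
        rw [this]
        exact ((measurable_F _).indicator (measurableSet_K _ _ _)).comp E.symm.measurable
      have hmem : ∀ (z : ℂ) (η' : Fin n → ℂ),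
          ((0 : Fin (n+1)).insertNth z η' ∈ K (n+1) e L)
            ↔ (1 ≤ Complex.normSq z
                ∧ η' ∈ K n e' (L - a * Real.log (Complex.normSq z))) := by
        intro z η'
        simp only [K, mem_setOf_eq]
        rw [Fin.forall_iff_succAbove (0 : Fin (n+1)),
          Fin.sum_univ_succAbove _ (0 : Fin (n+1))]
        simp only [Fin.insertNth_apply_same, Fin.insertNth_apply_succAbove]
        constructor
        · rintro ⟨⟨h1, h2⟩, h3⟩
          exact ⟨h1, h2, by linarith⟩
        · rintro ⟨h1, h2, h3⟩
          exact ⟨⟨h1, h2⟩, by linarith⟩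
      have hval : ∀ (z : ℂ) (η' : Fin n → ℂ),
          F (n+1) ((0 : Fin (n+1)).insertNth z η')
            = (ENNReal.ofReal (Complex.normSq z))⁻¹ * F n η' := by
        intro z η'
        simp only [F]
        rw [Fin.prod_univ_succAbove _ (0 : Fin (n+1))]
        simp only [Fin.insertNth_apply_same, Fin.insertNth_apply_succAbove]
      have hinner : ∀ z : ℂ, (∫⁻ η', g (z, η'))
          = Set.indicator (Ici (1:ℝ))
              (fun x => (ENNReal.ofReal x)⁻¹ * G (Real.log x)) (Complex.normSq z) := by
        intro z
        by_cases h1 : 1 ≤ Complex.normSq z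
        · rw [Set.indicator_of_mem (show Complex.normSq z ∈ Ici (1:ℝ) from h1)]
          have hpt : ∀ η' : Fin n → ℂ, g (z, η')
              = (ENNReal.ofReal (Complex.normSq z))⁻¹
                * Set.indicator (K n e' (L - a * Real.log (Complex.normSq z))) (F n) η' := by
            intro η'
            by_cases h2 : η' ∈ K n e' (L - a * Real.log (Complex.normSq z))
            · rw [hgdef]
              simp only []
              rw [Set.indicator_of_mem ((hmem z η').2 ⟨h1, h2⟩), Set.indicator_of_mem h2, hval]
            · rw [hgdef]
              simp only []
              rw [Set.indicator_of_notMem (fun hm => h2 ((hmem z η').1 hm).2),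
                Set.indicator_of_notMem h2, mul_zero]
          have hnz : (ENNReal.ofReal (Complex.normSq z))⁻¹ ≠ ⊤ :=
            ENNReal.inv_ne_top.2 (ENNReal.ofReal_pos.2 (lt_of_lt_of_le zero_lt_one h1)).ne'
          simp_rw [hpt]
          rw [lintegral_const_mul' _ _ hnz, lintegral_indicator (measurableSet_K _ _ _), hIH]
        · rw [Set.indicator_of_notMem (show Complex.normSq z ∉ Ici (1:ℝ) from h1)]
          have hpt : ∀ η' : Fin n → ℂ, g (z, η') = 0 := by
            intro η'
            exact Set.indicator_of_notMem (fun hm => h1 ((hmem z η').1 hm).1) _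
          simp [hpt]
      calc ∫⁻ η in K (n+1) e L, F (n+1) η
          = ∫⁻ η, Set.indicator (K (n+1) e L) (F (n+1)) η ∂volume := by
            rw [lintegral_indicator (measurableSet_K _ _ _)]
        _ = ∫⁻ η, g (E η) ∂(Measure.pi fun _ : Fin (n+1) => (volume : Measure ℂ)) := by
            rw [volume_pi]
            congr 1
            funext η
            rw [hgdef]
            simp only []
            rw [show ((0 : Fin (n+1)).insertNth (E η).1 (E η).2) = E.symm (E η) from (hEsymm _).symm,
              MeasurableEquiv.symm_apply_apply]
        _ = ∫⁻ p, g p ∂((volume : Measure ℂ).prod (Measure.pi fun _ : Fin n => (volume : Measure ℂ))) :=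
            hmp.lintegral_comp hgmeas
        _ = ∫⁻ z : ℂ, ∫⁻ η' : Fin n → ℂ, g (z, η') := by
            rw [lintegral_prod _ hgmeas.aemeasurable]
            rw [volume_pi]
        _ = ∫⁻ z : ℂ, Set.indicator (Ici (1:ℝ))
              (fun x => (ENNReal.ofReal x)⁻¹ * G (Real.log x)) (Complex.normSq z) := by
            congr 1
            funext z
            exact hinner z
        _ = NNReal.pi * ∫⁻ t in Ioi (0:ℝ), G t := lemmaA G hGmeas
        _ = NNReal.pi * (c * ENNReal.ofReal (L^(n+1) / (a * (n+1)))) := by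
            congr 1
            rw [hGdef, lintegral_indicator hSmeas, Measure.restrict_restrict hSmeas]
            have hset : {t : ℝ | a * t ≤ L} ∩ Ioi 0 = Ioc 0 (L/a) := by
              ext t
              simp only [mem_inter_iff, mem_setOf_eq, mem_Ioi, mem_Ioc]
              rw [mul_comm, ← le_div_iff₀ ha]
              tauto
            rw [hset, lintegral_const_mul' _ _ hcne, oned a L ha hL n]
        _ = (NNReal.pi : ℝ≥0∞) ^ (n+1)
            * ENNReal.ofReal (L ^ (n+1) / ((n+1).factorial * ∏ i, (e i : ℝ))) := by
            rw [hc]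
            have hD : (0:ℝ) < (n.factorial : ℝ) * ∏ j, (e' j : ℝ) := by
              apply mul_pos
              · exact_mod_cast Nat.factorial_pos n
              · exact Finset.prod_pos fun j _ => by exact_mod_cast he' j
            rw [show (NNReal.pi : ℝ≥0∞) * ((NNReal.pi : ℝ≥0∞)^n
                * ENNReal.ofReal (1 / ((n.factorial : ℝ) * ∏ j, (e' j : ℝ)))
                * ENNReal.ofReal (L^(n+1) / (a * (n+1))))
              = (NNReal.pi : ℝ≥0∞)^(n+1)
                * (ENNReal.ofReal (1 / ((n.factorial : ℝ) * ∏ j, (e' j : ℝ)))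
                  * ENNReal.ofReal (L^(n+1) / (a * (n+1)))) from by ring]
            congr 1
            rw [← ENNReal.ofReal_mul (by positivity)]
            congr 1
            have hprod : ∏ i : Fin (n+1), (e i : ℝ) = a * ∏ j, (e' j : ℝ) := by
              rw [Fin.prod_univ_succAbove _ (0 : Fin (n+1))]
            have hfact : (((n+1).factorial : ℕ) : ℝ) = (n+1) * (n.factorial : ℝ) := by
              rw [Nat.factorial_succ]
              push_cast
              ring
            rw [hprod, hfact]
            have h1 : (n.factorial : ℝ) ≠ 0 := by positivity
            have h2 : (∏ j, (e' j : ℝ)) ≠ 0 := by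
              refine ne_of_gt (Finset.prod_pos fun j _ => ?_)
              exact_mod_cast he' j
            have h3 : a ≠ 0 := ne_of_gt ha
            field_simp

end Stmt16Aux

open Stmt16Aux

/-- eq. 6.2: the α-constant integral
`∫_{|η_j| ≥ 1, |η₁²η₃⁴η₄⁴η₅⁵η₆⁶η₇³| ≤ B} dη/|η₁η₃η₄η₅η₆η₇| = 3π⁶·(1/6220800)·(log B)⁶`,
where `|z| = z·conj z` and `η 0, …, η 5` stand for `η₁, η₃, η₄, η₅, η₆, η₇`. -/
theorem stmt_16 (B : ℝ) (hB : 3 ≤ B) :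
    (∫ η in {η : Fin 6 → ℂ | (∀ i, 1 ≤ Complex.normSq (η i)) ∧
        Complex.normSq (η 0 ^ 2 * η 1 ^ 4 * η 2 ^ 4 * η 3 ^ 5 * η 4 ^ 6 * η 5 ^ 3) ≤ B},
        1 / Complex.normSq (η 0 * η 1 * η 2 * η 3 * η 4 * η 5))
      = 3 * π ^ 6 * (1 / 6220800) * Real.log B ^ 6 := by
  have hB1 : (1:ℝ) ≤ B := by linarith
  have hB0 : (0:ℝ) < B := by linarith
  have hLB : 0 ≤ Real.log B := Real.log_nonneg hB1
  set e : Fin 6 → ℕ := ![2,4,4,5,6,3] with he_def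
  have hsetK : {η : Fin 6 → ℂ | (∀ i, 1 ≤ Complex.normSq (η i)) ∧
        Complex.normSq (η 0 ^ 2 * η 1 ^ 4 * η 2 ^ 4 * η 3 ^ 5 * η 4 ^ 6 * η 5 ^ 3) ≤ B}
      = K 6 e (Real.log B) := by
    ext η
    simp only [mem_setOf_eq, K]
    refine and_congr_right fun h1 => ?_
    have hx : ∀ i, (0:ℝ) < Complex.normSq (η i) :=
      fun i => lt_of_lt_of_le zero_lt_one (h1 i)
    have hprod : Complex.normSq (η 0 ^ 2 * η 1 ^ 4 * η 2 ^ 4 * η 3 ^ 5 * η 4 ^ 6 * η 5 ^ 3)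
        = (Complex.normSq (η 0))^2 * (Complex.normSq (η 1))^4 * (Complex.normSq (η 2))^4
          * (Complex.normSq (η 3))^5 * (Complex.normSq (η 4))^6 * (Complex.normSq (η 5))^3 := by
      simp [map_mul, map_pow]
    have h0 := hx 0; have h1' := hx 1; have h2' := hx 2
    have h3' := hx 3; have h4' := hx 4; have h5' := hx 5
    have hP : (0:ℝ) < (Complex.normSq (η 0))^2 * (Complex.normSq (η 1))^4
        * (Complex.normSq (η 2))^4 * (Complex.normSq (η 3))^5 * (Complex.normSq (η 4))^6
        * (Complex.normSq (η 5))^3 := by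
      positivity
    rw [hprod, ← Real.log_le_log_iff hP hB0]
    have hlog : Real.log ((Complex.normSq (η 0))^2 * (Complex.normSq (η 1))^4
        * (Complex.normSq (η 2))^4 * (Complex.normSq (η 3))^5 * (Complex.normSq (η 4))^6
        * (Complex.normSq (η 5))^3)
        = 2 * Real.log (Complex.normSq (η 0)) + 4 * Real.log (Complex.normSq (η 1))
          + 4 * Real.log (Complex.normSq (η 2)) + 5 * Real.log (Complex.normSq (η 3))
          + 6 * Real.log (Complex.normSq (η 4)) + 3 * Real.log (Complex.normSq (η 5)) := by
      rw [Real.log_mul (by positivity) (by positivity),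
        Real.log_mul (by positivity) (by positivity),
        Real.log_mul (by positivity) (by positivity),
        Real.log_mul (by positivity) (by positivity),
        Real.log_mul (by positivity) (by positivity),
        Real.log_pow, Real.log_pow, Real.log_pow, Real.log_pow, Real.log_pow, Real.log_pow]
      push_cast
      ring
    rw [hlog]
    have hsum : ∑ i, (e i : ℝ) * Real.log (Complex.normSq (η i))
        = 2 * Real.log (Complex.normSq (η 0)) + 4 * Real.log (Complex.normSq (η 1))
          + 4 * Real.log (Complex.normSq (η 2)) + 5 * Real.log (Complex.normSq (η 3))
          + 6 * Real.log (Complex.normSq (η 4)) + 3 * Real.log (Complex.normSq (η 5)) := by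
      have g0 : e 0 = 2 := rfl
      have g1 : e 1 = 4 := rfl
      have g2 : e 2 = 4 := rfl
      have g3 : e 3 = 5 := rfl
      have g4 : e 4 = 6 := rfl
      have g5 : e 5 = 3 := rfl
      rw [Fin.sum_univ_six, g0, g1, g2, g3, g4, g5]
      push_cast
      ring
    rw [hsum]
  rw [hsetK]
  have hfmeas : Measurable fun η : Fin 6 → ℂ =>
      1 / Complex.normSq (η 0 * η 1 * η 2 * η 3 * η 4 * η 5) := by
    apply Measurable.div measurable_const
    exact Complex.continuous_normSq.measurable.comp
      (((((((measurable_pi_apply 0).mul (measurable_pi_apply 1)).mul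
        (measurable_pi_apply 2)).mul (measurable_pi_apply 3)).mul
        (measurable_pi_apply 4)).mul (measurable_pi_apply 5)))
  rw [MeasureTheory.integral_eq_lintegral_of_nonneg_ae
    (ae_of_all _ fun η => div_nonneg zero_le_one (Complex.normSq_nonneg _)) hfmeas.aestronglyMeasurable]
  have hlint : ∫⁻ η in K 6 e (Real.log B),
      ENNReal.ofReal (1 / Complex.normSq (η 0 * η 1 * η 2 * η 3 * η 4 * η 5))
      = ∫⁻ η in K 6 e (Real.log B), F 6 η := by
    refine setLIntegral_congr_fun (measurableSet_K _ _ _) (fun η hη => ?_)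
    have hx : ∀ i, (0:ℝ) < Complex.normSq (η i) :=
      fun i => lt_of_lt_of_le zero_lt_one (hη.1 i)
    have hprod : Complex.normSq (η 0 * η 1 * η 2 * η 3 * η 4 * η 5)
        = Complex.normSq (η 0) * Complex.normSq (η 1) * Complex.normSq (η 2)
          * Complex.normSq (η 3) * Complex.normSq (η 4) * Complex.normSq (η 5) := by
      simp [Complex.normSq_mul]
    rw [hprod, F, Fin.prod_univ_six]
    have h0 := hx 0; have h1 := hx 1; have h2 := hx 2
    have h3 := hx 3; have h4 := hx 4; have h5 := hx 5
    rw [show (1:ℝ) / (Complex.normSq (η 0) * Complex.normSq (η 1) * Complex.normSq (η 2)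
          * Complex.normSq (η 3) * Complex.normSq (η 4) * Complex.normSq (η 5))
        = (Complex.normSq (η 0))⁻¹ * (Complex.normSq (η 1))⁻¹ * (Complex.normSq (η 2))⁻¹
          * (Complex.normSq (η 3))⁻¹ * (Complex.normSq (η 4))⁻¹ * (Complex.normSq (η 5))⁻¹
      from by field_simp]
    rw [ENNReal.ofReal_mul (by positivity), ENNReal.ofReal_mul (by positivity),
      ENNReal.ofReal_mul (by positivity), ENNReal.ofReal_mul (by positivity),
      ENNReal.ofReal_mul (by positivity),
      ENNReal.ofReal_inv_of_pos h0, ENNReal.ofReal_inv_of_pos h1,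
      ENNReal.ofReal_inv_of_pos h2, ENNReal.ofReal_inv_of_pos h3,
      ENNReal.ofReal_inv_of_pos h4, ENNReal.ofReal_inv_of_pos h5]
  rw [hlint, key 6 e (by decide) (Real.log B) hLB]
  have hfact : ((6:ℕ).factorial : ℝ) = 720 := by norm_num [Nat.factorial]
  have hprod : (∏ i, (e i : ℝ)) = 2880 := by
    have g0 : e 0 = 2 := rfl
    have g1 : e 1 = 4 := rfl
    have g2 : e 2 = 4 := rfl
    have g3 : e 3 = 5 := rfl
    have g4 : e 4 = 6 := rfl
    have g5 : e 5 = 3 := rfl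
    rw [Fin.prod_univ_six, g0, g1, g2, g3, g4, g5]
    norm_num
  rw [hfact, hprod, ENNReal.toReal_mul, ENNReal.toReal_pow, ENNReal.coe_toReal,
    NNReal.coe_real_pi, ENNReal.toReal_ofReal (by positivity)]
  ring
end
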